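/- arXiv:1711.08258 — 6 statements merged into one kernel-verified Lean document; each statement's English description precedes it below -/
import Mathlib

section
/- For any support fabric F = (I, H) and any nonempty stratum J ∈ H, the map π_J^# : H' → H from the strata of the blow-up π_J(F) to the strata of F is continuous with respect to the subspace Zariski topologies. -/
open scoped Pointwise

namespace RedSing

/-! ### Vectors and polyhedra.
A vector "in `ℝ^J`" is a function `ℕ → ℝ` supported on the finite set `J`. -/

abbrev Vec : Type := ℕ → ℝ

/-- The cone `ℝ_{≥0}^J` of nonnegative vectors supported on `J`. -/
def suppCone (J : Finset ℕ) : Set Vec :=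
  {σ | (∀ j, 0 ≤ σ j) ∧ ∀ j, j ∉ J → σ j = 0}

/-- Positive convex hull `[[A]] = convexHull (A + ℝ_{≥0}^J)`. -/
noncomputable def posHull (J : Finset ℕ) (A : Set Vec) : Set Vec :=
  convexHull ℝ (A + suppCone J)

/-- The lattice points `(1/d)·ℤ_{≥0}^J`. -/
def latticePts (J : Finset ℕ) (d : ℕ) : Set Vec :=
  {σ | σ ∈ suppCone J ∧ ∀ j, ∃ m : ℕ, σ j = (m : ℝ) / (d : ℝ)}

/-- `Δ ⊆ ℝ_{≥0}^J` is a characteristic polyhedron with denominator `d`. -/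
def IsCharPoly (J : Finset ℕ) (d : ℕ) (Δ : Set Vec) : Prop :=
  ∃ A, A ⊆ latticePts J d ∧ Δ = posHull J A

/-! ### Support fabrics -/

/-- A support fabric: a nonempty finite index set `I` together with a
downward-closed family `H` of subsets of `I` (the strata). -/
structure Fabric where
  I : Finset ℕ
  I_nonempty : I.Nonempty
  H : Set (Finset ℕ)
  mem_sub : ∀ J ∈ H, J ⊆ I
  downward : ∀ J ∈ H, ∀ J' ⊆ J, J' ∈ H

/-- Dimension of a support fabric: the maximal cardinality of a stratum. -/
noncomputable def Fabric.dim (F : Fabric) : ℕ :=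
  sSup {n | ∃ J ∈ F.H, J.card = n}

/-- The Zariski topology on finsets: the open sets are the downward-closed families;
subsets such as the strata set `H` carry the subspace topology. -/
instance zariskiTopology : TopologicalSpace (Finset ℕ) where
  IsOpen U := ∀ J ∈ U, ∀ J' ⊆ J, J' ∈ U
  isOpen_univ := fun J _ J' _ => Set.mem_univ J'
  isOpen_inter := fun s t hs ht J hJ J' hJ' => ⟨hs J hJ.1 J' hJ', ht J hJ.2 J' hJ'⟩
  isOpen_sUnion := fun S hS J hJ J' hJ' => by
    obtain ⟨t, htS, hJt⟩ := hJ
    exact ⟨t, htS, hS t htS J hJt J' hJ'⟩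

/-! ### Polyhedra systems -/

/-- A polyhedra system over a support fabric: a nonempty characteristic polyhedron
with denominator `d` for each stratum, compatible with the projections
(restriction of functions). -/
structure PolySys where
  F : Fabric
  d : ℕ
  d_pos : 0 < d
  Δ : Finset ℕ → Set Vec
  char : ∀ J ∈ F.H, IsCharPoly J d (Δ J)
  nonempty : ∀ J ∈ F.H, (Δ J).Nonempty
  compat : ∀ J₁ ∈ F.H, ∀ J₂ ∈ F.H, J₁ ⊆ J₂ →
    Δ J₁ = (fun σ => fun j => if j ∈ J₁ then σ j else 0) '' Δ J₂

/-- Contact exponent `δ(Δ) = min {|σ| : σ ∈ Δ}` (with the convention `δ = -1`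
for the empty index set). -/
noncomputable def contactExp (J : Finset ℕ) (Δ : Set Vec) : ℝ :=
  if J = (∅ : Finset ℕ) then -1 else sInf ((fun σ => ∑ j ∈ J, σ j) '' Δ)

/-- Singular locus: strata with contact exponent at least 1. -/
def Sing (D : PolySys) : Set (Finset ℕ) :=
  {J | J ∈ D.F.H ∧ 1 ≤ contactExp J (D.Δ J)}

/-- `D` is special: `δ(D) = max {δ(Δ_J)} = 1`. -/
def IsSpecial (D : PolySys) : Prop :=
  (∀ J ∈ D.F.H, contactExp J (D.Δ J) ≤ 1) ∧ ∃ J ∈ D.F.H, contactExp J (D.Δ J) = 1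

/-! ### Blow-ups and transforms -/

/-- The strata of the blow-up centered in `J`, with new index `inf` (playing `∞`). -/
def blowupH (H : Set (Finset ℕ)) (J : Finset ℕ) (inf : ℕ) : Set (Finset ℕ) :=
  {K | K ∈ H ∧ ¬ J ⊆ K} ∪
    {J' | ∃ K, (K ∈ H ∧ J ⊆ K) ∧ ∃ A, A ⊂ J ∧ J' = (K \ J) ∪ A ∪ {inf}}

/-- The map `π_J^#` from the strata of the blow-up to the strata of `F`. -/
def blowdown (J : Finset ℕ) (inf : ℕ) (J' : Finset ℕ) : Finset ℕ :=
  if inf ∈ J' then (J'.erase inf) ∪ J else J'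

/-- The map `λ_{J'} : ℝ^K → ℝ^{J'}`. -/
noncomputable def lamMap (J J' : Finset ℕ) (inf : ℕ) (σ : Vec) : Vec :=
  fun j => if j = inf then ∑ i ∈ J, σ i else if j ∈ J' then σ j else 0

/-- The indicator vector `e_{J',∞}` of the new index. -/
def eVec (inf : ℕ) : Vec := fun j => if j = inf then 1 else 0

/-- The polyhedron `Δ⁰_{J'}` of the total transform at a stratum `J'` of the blow-up. -/
noncomputable def totalΔ (D : PolySys) (J : Finset ℕ) (inf : ℕ) (J' : Finset ℕ) : Set Vec :=
  if inf ∈ J' then posHull J' (lamMap J J' inf '' D.Δ (blowdown J inf J'))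
  else D.Δ J'

/-- The polyhedron `Δ'_{J'} = Δ⁰_{J'} - e_{J',∞}` of the characteristic transform
(`e_{J',∞} = 0` when `∞ ∉ J'`). -/
noncomputable def charΔ (D : PolySys) (J : Finset ℕ) (inf : ℕ) (J' : Finset ℕ) : Set Vec :=
  if inf ∈ J' then
    (fun σ => σ - eVec inf) '' posHull J' (lamMap J J' inf '' D.Δ (blowdown J inf J'))
  else D.Δ J'

/-- `D'` is the total transform `Λ⁰_J(D)` of `D` centered in the nonempty stratum `J`,
with new index `inf`. -/
def IsTotalTransformAt (D D' : PolySys) (J : Finset ℕ) (inf : ℕ) : Prop :=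
  J ∈ D.F.H ∧ J ≠ ∅ ∧ D'.d = D.d ∧ inf ∉ D.F.I ∧
  D'.F.I = insert inf D.F.I ∧ D'.F.H = blowupH D.F.H J inf ∧
  ∀ J' ∈ D'.F.H, D'.Δ J' = totalΔ D J inf J'

/-- `D'` is a total transform of `D` centered in `J`. -/
def IsTotalTransform (D D' : PolySys) (J : Finset ℕ) : Prop :=
  ∃ inf, IsTotalTransformAt D D' J inf

/-- `D'` is the characteristic transform `Λ_J(D)` of `D` centered in the singular
stratum `J`, with new index `inf`. -/
def IsCharTransformAt (D D' : PolySys) (J : Finset ℕ) (inf : ℕ) : Prop :=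
  J ∈ Sing D ∧ D'.d = D.d ∧ inf ∉ D.F.I ∧
  D'.F.I = insert inf D.F.I ∧ D'.F.H = blowupH D.F.H J inf ∧
  ∀ J' ∈ D'.F.H, D'.Δ J' = charΔ D J inf J'

/-- `D'` is a characteristic transform of `D` centered in `J`. -/
def IsCharTransform (D D' : PolySys) (J : Finset ℕ) : Prop :=
  ∃ inf, IsCharTransformAt D D' J inf

/-- A reduction of singularities of `D`: a finite sequence of characteristic
transforms, each centered in a singular stratum of the previous system, ending
in a system with empty singular locus. -/
def HasReduction (D : PolySys) : Prop :=
  ∃ (k : ℕ) (seq : ℕ → PolySys), seq 0 = D ∧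
    (∀ i, i < k → ∃ J, IsCharTransform (seq i) (seq (i + 1)) J) ∧
    Sing (seq k) = ∅

/-! ### Strict tangent space and maximal contact -/

/-- Hironaka's strict tangent space `T(Δ)` of a polyhedron `Δ ⊆ ℝ_{≥0}^J`. -/
def strictTangent (J : Finset ℕ) (Δ : Set Vec) : Set ℕ :=
  {j | ∃ σ ∈ Δ, (∑ i ∈ J, σ i) = 1 ∧ σ j ≠ 0}

/-- The stratum `T` has maximal contact with the (special) system `D`. -/
def HasMaximalContact (D : PolySys) (T : Finset ℕ) : Prop :=
  T ∈ D.F.H ∧ ∀ J ∈ Sing D, (↑T : Set ℕ) ⊆ strictTangent J (D.Δ J)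

/-! ### Hironaka's projection from a stratum `T` -/

/-- Hironaka's projection `∇_J^T(σ) = σ|_{J∖T} / (1 - Σ_{j∈T} σ(j))`. -/
noncomputable def hironakaProj (T J : Finset ℕ) (σ : Vec) : Vec :=
  fun j => if j ∈ J \ T then σ j / (1 - ∑ i ∈ T, σ i) else 0

/-- The polyhedron `Δ^T_{J*} = ∇_J^T(Δ_J ∩ M_J^T)` of Hironaka's projection,
where `J = J* ∪ T`. -/
noncomputable def projΔ (D : PolySys) (T J' : Finset ℕ) : Set Vec :=
  hironakaProj T (J' ∪ T) '' {σ | σ ∈ D.Δ (J' ∪ T) ∧ (∑ i ∈ T, σ i) < 1}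

/-- The strata `H^T = {J ∖ T : T ⊆ J ∈ H}` of the projected fabric `F^T`. -/
def projH (F : Fabric) (T : Finset ℕ) : Set (Finset ℕ) :=
  {J' | ∃ J, (J ∈ F.H ∧ T ⊆ J) ∧ J' = J \ T}

/-- The singular locus of Hironaka's projection `D^T`. -/
def projSing (D : PolySys) (T : Finset ℕ) : Set (Finset ℕ) :=
  {J' | J' ∈ projH D.F T ∧ (projΔ D T J').Nonempty ∧ 1 ≤ contactExp J' (projΔ D T J')}

/-- `E` is Hironaka's projection `D^T` of `D` from the stratum `T`
(a polyhedra system over `F^T` with denominator `d!·d`). -/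
def IsHironakaProjection (D E : PolySys) (T : Finset ℕ) : Prop :=
  E.F.I = D.F.I \ T ∧ E.F.H = projH D.F T ∧ E.d = Nat.factorial D.d * D.d ∧
  ∀ J' ∈ E.F.H, E.Δ J' = projΔ D T J'

/-! ### Reduction `Red_C` of a system to a closed set `C` of strata -/

/-- The fabric `Red_C(F)`, with strata `H_C = ⋃_{J ∈ C} P(J)`. -/
def Fabric.red (F : Fabric) (C : Set (Finset ℕ)) : Fabric where
  I := F.I
  I_nonempty := F.I_nonempty
  H := {J' | ∃ J, (J ∈ C ∧ J ∈ F.H) ∧ J' ⊆ J}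
  mem_sub := by
    rintro J' ⟨J, ⟨_, hJH⟩, hsub⟩
    exact hsub.trans (F.mem_sub J hJH)
  downward := by
    rintro J' ⟨J, hJ, hsub⟩ J'' hsub'
    exact ⟨J, hJ, hsub'.trans hsub⟩

/-- The reduction `Red_C(D)` of a polyhedra system to a closed set `C ⊆ H`. -/
noncomputable def PolySys.red (D : PolySys) (C : Set (Finset ℕ)) : PolySys where
  F := D.F.red C
  d := D.d
  d_pos := D.d_pos
  Δ := D.Δ
  char := by
    rintro J ⟨K, ⟨_, hK⟩, hsub⟩
    exact D.char J (D.F.downward K hK J hsub)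
  nonempty := by
    rintro J ⟨K, ⟨_, hK⟩, hsub⟩
    exact D.nonempty J (D.F.downward K hK J hsub)
  compat := by
    rintro J₁ ⟨K₁, ⟨_, hK₁⟩, h₁⟩ J₂ ⟨K₂, ⟨_, hK₂⟩, h₂⟩ h12
    exact D.compat J₁ (D.F.downward K₁ hK₁ J₁ h₁) J₂ (D.F.downward K₂ hK₂ J₂ h₂) h12

/-- A special polyhedra system is consistent if for each connected component `C`
of its singular locus there is a stratum having maximal contact with `Red_C(D)`
(non-singular systems are consistent by convention). -/
def IsConsistent (D : PolySys) : Prop :=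
  ∀ x ∈ Sing D, ∃ T, HasMaximalContact (D.red (connectedComponentIn (Sing D) x)) T

/-! ### Fitting and Spivakovsky's invariant -/

/-- The fitting vector `w_Δ(j) = min {σ(j) : σ ∈ Δ}`. -/
noncomputable def fitVec (Δ : Set Vec) : Vec := fun j => sInf ((fun σ => σ j) '' Δ)

/-- The fitting `Δ̃ = Δ - w_Δ`. -/
noncomputable def fitting (Δ : Set Vec) : Set Vec := (fun σ => σ - fitVec Δ) '' Δ

/-- Spivakovsky's invariant `Spi_D = max {δ(Δ̃_J) : J ∈ Sing(D)}`. -/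
noncomputable def spi (D : PolySys) : ℝ :=
  sSup {x | ∃ J ∈ Sing D, contactExp J (fitting (D.Δ J)) = x}

/-- `S(D) = {J ∈ Sing(D) : δ(Δ̃_J) = Spi_D}`. -/
def SSet (D : PolySys) : Set (Finset ℕ) :=
  {J | J ∈ Sing D ∧ contactExp J (fitting (D.Δ J)) = spi D}

/-! ### Moderated transforms, normal crossings, quasi-ordinary systems -/

/-- The polyhedron of the `d`-moderated transform `Θ^d_J(N) = N(Λ_J(N/d))`
at a stratum `J'` of the blow-up. -/
noncomputable def modΔ (N : PolySys) (d : ℕ) (J : Finset ℕ) (inf : ℕ) (J' : Finset ℕ) :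
    Set Vec :=
  if inf ∈ J' then
    (fun σ => σ - (d : ℝ) • eVec inf) ''
      posHull J' (lamMap J J' inf '' N.Δ (blowdown J inf J'))
  else N.Δ J'

/-- `N'` is the `d`-moderated transform `Θ^d_J(N)` of the Newton polyhedra system `N`
centered in a stratum `J` with `δ(N_J) ≥ d`, with new index `inf`. -/
def IsModTransformAt (N N' : PolySys) (d : ℕ) (J : Finset ℕ) (inf : ℕ) : Prop :=
  N.d = 1 ∧ N'.d = 1 ∧ J ∈ N.F.H ∧ (d : ℝ) ≤ contactExp J (N.Δ J) ∧ inf ∉ N.F.I ∧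
  N'.F.I = insert inf N.F.I ∧ N'.F.H = blowupH N.F.H J inf ∧
  ∀ J' ∈ N'.F.H, N'.Δ J' = modΔ N d J inf J'

/-- `N'` is a `d`-moderated transform of `N` centered in `J`. -/
def IsModTransform (N N' : PolySys) (d : ℕ) (J : Finset ℕ) : Prop :=
  ∃ inf, IsModTransformAt N N' d J inf

/-- A Newton polyhedra system has normal crossings if each polyhedron has a
single vertex. -/
def HasNormalCrossings (D : PolySys) : Prop :=
  ∀ J ∈ D.F.H, ∃ σ, D.Δ J = posHull J {σ}

/-- `D` is Hironaka quasi-ordinary: each polyhedron over a singular stratum has a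
single vertex. -/
def IsQuasiOrdinary (D : PolySys) : Prop :=
  ∀ J ∈ Sing D, ∃ σ, D.Δ J = posHull J {σ}

/-! ### Lexicographic order on sequences of naturals -/

/-- Strict lexicographic order on sequences `ℕ → ℕ`. -/
def LexLt (φ ψ : ℕ → ℕ) : Prop := ∃ n, φ n < ψ n ∧ ∀ m < n, φ m = ψ m

/-- A weakly decreasing sequence of naturals. -/
def WeaklyDecr (φ : ℕ → ℕ) : Prop := ∀ n, φ (n + 1) ≤ φ n

lemma blowdown_mono (J : Finset ℕ) (inf : ℕ) {K K' : Finset ℕ} (h : K' ⊆ K) :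
    blowdown J inf K' ⊆ blowdown J inf K := by
  unfold blowdown
  by_cases h1 : inf ∈ K'
  · rw [if_pos h1, if_pos (h h1)]
    exact Finset.union_subset_union (Finset.erase_subset_erase _ h) le_rfl
  · rw [if_neg h1]
    by_cases h2 : inf ∈ K
    · rw [if_pos h2]
      refine Finset.Subset.trans ?_ Finset.subset_union_left
      intro x hx
      exact Finset.mem_erase.mpr ⟨fun e => h1 (e ▸ hx), h hx⟩
    · rw [if_neg h2]; exact h

lemma blowdown_continuous_global (J : Finset ℕ) (inf : ℕ) :
    Continuous (blowdown J inf) := by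
  constructor
  intro U hU K hK K' hK'
  exact hU _ hK _ (blowdown_mono J inf hK')

/-- The map `π_J^#` from the strata of the blow-up `π_J(F)` to the strata of `F`
is continuous for the (subspace) Zariski topologies. -/
theorem blowdown_continuous (F : Fabric) (J : Finset ℕ) (hJ : J ∈ F.H)
    (hJne : J ≠ ∅) (inf : ℕ) (hinf : inf ∉ F.I) :
    Set.MapsTo (blowdown J inf) (blowupH F.H J inf) F.H ∧
      ContinuousOn (blowdown J inf) (blowupH F.H J inf) := by
  refine ⟨?_, (blowdown_continuous_global J inf).continuousOn⟩
  rintro J' (⟨hJ'H, hnsub⟩ | ⟨K, ⟨hKH, hJK⟩, A, hAJ, rfl⟩)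
  · have hinf' : inf ∉ J' := fun h => hinf (F.mem_sub J' hJ'H h)
    simpa [blowdown, hinf'] using hJ'H
  · have hinfmem : inf ∈ K \ J ∪ A ∪ {inf} := by simp
    have hAsub : A ⊆ J := hAJ.subset
    have hinfK : inf ∉ K := fun h => hinf (F.mem_sub K hKH h)
    have hinfA : inf ∉ A := fun h => hinfK (hJK (hAsub h))
    have herase : (K \ J ∪ A ∪ {inf}).erase inf = K \ J ∪ A := by
      ext x
      simp only [Finset.mem_erase, Finset.mem_union, Finset.mem_singleton]
      constructor
      · rintro ⟨hx, (h | h) | h⟩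
        · exact Or.inl h
        · exact Or.inr h
        · exact absurd h hx
      · rintro (h | h)
        · exact ⟨fun e => hinfK (Finset.mem_sdiff.mp (e ▸ h)).1, Or.inl (Or.inl h)⟩
        · exact ⟨fun e => hinfA (e ▸ h), Or.inl (Or.inr h)⟩
    have : blowdown J inf (K \ J ∪ A ∪ {inf}) = K := by
      rw [blowdown, if_pos hinfmem, herase]
      ext x
      simp only [Finset.mem_union, Finset.mem_sdiff]
      constructor
      · rintro ((⟨h, _⟩ | h) | h)
        · exact h
        · exact hJK (hAsub h)
        · exact hJK h
      · intro hx
        by_cases hxJ : x ∈ J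
        · exact Or.inr hxJ
        · exact Or.inl (Or.inl ⟨hx, hxJ⟩)
    rw [this]; exact hKH

end RedSing
end

section
/- Let F = (I, H) be a support fabric, U ⊆ H a downward-closed (open) subset, and J ∈ U a nonempty stratum. Then π_J(F|_U) = π_J(F)|_{U'}, where U' = (π_J^#)^{-1}(U) and F|_U = (I, U) denotes the restriction of F to U. -/
open scoped Pointwise

namespace RedSing

lemma blowdown_aux {J K A : Finset ℕ} {inf : ℕ} (hJK : J ⊆ K) (hAJ : A ⊂ J)
    (hiK : inf ∉ K) :
    blowdown J inf ((K \ J) ∪ A ∪ {inf}) = K := by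
  unfold blowdown
  rw [if_pos (by simp)]
  ext x
  simp only [Finset.mem_union, Finset.mem_erase, Finset.mem_sdiff,
    Finset.mem_singleton]
  constructor
  · rintro (⟨hx, (⟨hxK, _⟩ | hxA) | hx1⟩ | hxJ)
    · exact hxK
    · exact hJK (hAJ.subset hxA)
    · exact absurd hx1 hx
    · exact hJK hxJ
  · intro hxK
    by_cases hxJ : x ∈ J
    · exact Or.inr hxJ
    · exact Or.inl ⟨fun h => hiK (h ▸ hxK), Or.inl (Or.inl ⟨hxK, hxJ⟩)⟩

/-- `π_J(F|_U) = π_J(F)|_{U'}` where `U' = (π_J^#)⁻¹(U)`: blowing-up the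
restriction of `F` to a downward-closed `U ⊆ H` yields the restriction of the
blow-up of `F` to the preimage of `U` (the index sets are trivially equal). -/
theorem blowup_restrict_commute (F : Fabric) (U : Set (Finset ℕ)) (hUH : U ⊆ F.H)
    (hUdc : ∀ J ∈ U, ∀ J' ⊆ J, J' ∈ U) (J : Finset ℕ) (hJ : J ∈ U) (hJne : J ≠ ∅)
    (inf : ℕ) (hinf : inf ∉ F.I) :
    blowupH U J inf = blowupH F.H J inf ∩ blowdown J inf ⁻¹' U := by
  have hninf : ∀ K ∈ F.H, inf ∉ K := fun K hK h => hinf (F.mem_sub K hK h)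
  ext J'
  constructor
  · rintro (⟨hKU, hJK⟩ | ⟨K, ⟨hKU, hJK⟩, A, hAJ, rfl⟩)
    · have hKH := hUH hKU
      have hi : inf ∉ J' := hninf _ hKH
      refine ⟨Or.inl ⟨hKH, hJK⟩, ?_⟩
      rw [Set.mem_preimage, blowdown, if_neg hi]
      exact hKU
    · have hKH := hUH hKU
      refine ⟨Or.inr ⟨K, ⟨hKH, hJK⟩, A, hAJ, rfl⟩, ?_⟩
      rw [Set.mem_preimage, blowdown_aux hJK hAJ (hninf _ hKH)]
      exact hKU
  · rintro ⟨(⟨hKH, hJK⟩ | ⟨K, ⟨hKH, hJK⟩, A, hAJ, rfl⟩), hpre⟩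
    · have hi : inf ∉ J' := hninf _ hKH
      rw [Set.mem_preimage, blowdown, if_neg hi] at hpre
      exact Or.inl ⟨hpre, hJK⟩
    · rw [Set.mem_preimage, blowdown_aux hJK hAJ (hninf _ hKH)] at hpre
      exact Or.inr ⟨K, ⟨hpre, hJK⟩, A, hAJ, rfl⟩

end RedSing
end

section
/- CRS(1) holds: every polyhedra system of dimension at most 1 admits a reduction of singularities. -/
open scoped Pointwise

namespace RedSing

/-! ### Auxiliary machinery for the one-dimensional case -/

noncomputable def vtx (i : ℕ) (r : ℝ) : Vec := fun j => if j = i then r else 0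

def seg (i : ℕ) (r : ℝ) : Set Vec := {σ | (∀ j, j ≠ i → σ j = 0) ∧ r ≤ σ i}

lemma vtx_mem_seg {i : ℕ} {r t : ℝ} (h : r ≤ t) : vtx i t ∈ seg i r :=
  ⟨fun j hj => by simp [vtx, hj], by simpa [vtx] using h⟩

lemma seg_convex (i : ℕ) (r : ℝ) : Convex ℝ (seg i r) := by
  rintro σ ⟨hσ0, hσr⟩ τ ⟨hτ0, hτr⟩ a b ha hb hab
  constructor
  · intro j hj
    simp [hσ0 j hj, hτ0 j hj]
  · have h1 : a * r ≤ a * σ i := mul_le_mul_of_nonneg_left hσr ha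
    have h2 : b * r ≤ b * τ i := mul_le_mul_of_nonneg_left hτr hb
    have h4 : (a • σ + b • τ) i = a * σ i + b * τ i := by simp
    rw [h4]
    have h3 : a * r + b * r = r := by rw [← add_mul, hab, one_mul]
    linarith

lemma posHull_seg {i : ℕ} {r : ℝ} {S : Set Vec} (hS : S ⊆ seg i r) (hmem : vtx i r ∈ S) :
    posHull {i} S = seg i r := by
  apply Set.Subset.antisymm
  · apply convexHull_min _ (seg_convex i r)
    rintro σ ⟨a, ha, c, hc, rfl⟩
    obtain ⟨ha0, har⟩ := hS ha
    refine ⟨fun j hj => ?_, ?_⟩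
    · have : c j = 0 := hc.2 j (by simp [hj])
      simp [ha0 j hj, this]
    · have : (0:ℝ) ≤ c i := hc.1 i
      show r ≤ a i + c i
      linarith
  · intro σ ⟨hσ0, hσr⟩
    apply subset_convexHull
    refine ⟨vtx i r, hmem, σ - vtx i r, ⟨?_, ?_⟩, by funext j; simp⟩
    · intro j
      by_cases hj : j = i
      · subst hj; simp [vtx]; linarith
      · simp [vtx, hj, hσ0 j hj]
    · intro j hj
      have hj' : j ≠ i := by simpa using hj
      simp [vtx, hj', hσ0 j hj']

lemma vtx_mem_latticePts {i d m : ℕ} (hd : 0 < d) :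
    vtx i ((m : ℝ) / d) ∈ latticePts {i} d := by
  refine ⟨⟨fun j => ?_, fun j hj => ?_⟩, fun j => ?_⟩
  · by_cases hj : j = i
    · subst hj; simp [vtx]; positivity
    · simp [vtx, hj]
  · have hj' : j ≠ i := by simpa using hj
    simp [vtx, hj']
  · by_cases hj : j = i
    · subst hj; exact ⟨m, by simp [vtx]⟩
    · exact ⟨0, by simp [vtx, hj]⟩

lemma isCharPoly_seg {i d m : ℕ} (hd : 0 < d) :
    IsCharPoly {i} d (seg i ((m : ℝ) / d)) := by
  refine ⟨{vtx i ((m : ℝ) / d)}, ?_, ?_⟩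
  · simp [Set.singleton_subset_iff, vtx_mem_latticePts hd]
  · rw [posHull_seg (S := {vtx i ((m:ℝ)/d)}) ?_ rfl]
    intro a ha
    rw [Set.mem_singleton_iff] at ha
    subst ha
    exact vtx_mem_seg le_rfl

lemma charpoly_singleton {i d : ℕ} {Δ : Set Vec} (hd : 0 < d)
    (h : IsCharPoly {i} d Δ) (hne : Δ.Nonempty) :
    ∃ m : ℕ, Δ = seg i ((m : ℝ) / d) := by
  obtain ⟨A, hA, rfl⟩ := h
  have hdR : (0:ℝ) < d := by exact_mod_cast hd
  have hAne : A.Nonempty := by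
    by_contra hc
    rw [Set.not_nonempty_iff_eq_empty] at hc
    subst hc
    rw [posHull, Set.empty_add, convexHull_empty] at hne
    exact Set.not_nonempty_empty hne
  obtain ⟨a₀, ha₀⟩ := hAne
  set M : Set ℕ := {m | ∃ a ∈ A, a i = (m : ℝ) / d} with hM
  have hMne : M.Nonempty := by
    obtain ⟨m, hm⟩ := (hA ha₀).2 i
    exact ⟨m, a₀, ha₀, hm⟩
  set m := sInf M with hmdef
  obtain ⟨a₁, ha₁A, ha₁⟩ := Nat.sInf_mem hMne
  have hsub : A ⊆ seg i ((m : ℝ) / d) := by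
    intro a ha
    refine ⟨fun j hj => (hA ha).1.2 j (by simpa using hj), ?_⟩
    obtain ⟨k, hk⟩ := (hA ha).2 i
    have hkM : k ∈ M := ⟨a, ha, hk⟩
    have : m ≤ k := Nat.sInf_le hkM
    rw [hk]
    have : (m:ℝ) ≤ (k:ℝ) := by exact_mod_cast this
    gcongr
  have hvtx : vtx i ((m : ℝ) / d) ∈ A := by
    have : a₁ = vtx i ((m : ℝ) / d) := by
      funext j
      by_cases hj : j = i
      · subst hj; simp [vtx, ha₁, hmdef]
      · simp [vtx, hj, (hA ha₁A).1.2 j (by simpa using hj)]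
    rwa [this] at ha₁A
  exact ⟨m, posHull_seg hsub hvtx⟩

lemma contact_seg (i : ℕ) (r : ℝ) : contactExp {i} (seg i r) = r := by
  rw [contactExp, if_neg (by simp)]
  have himg : (fun σ => ∑ j ∈ ({i} : Finset ℕ), σ j) '' seg i r = Set.Ici r := by
    ext t
    simp only [Finset.sum_singleton, Set.mem_image, Set.mem_Ici]
    constructor
    · rintro ⟨σ, ⟨_, hr⟩, rfl⟩; exact hr
    · intro h
      exact ⟨vtx i t, vtx_mem_seg h, by simp [vtx]⟩
  rw [himg, csInf_Ici]



lemma lam_image_seg {i inf : ℕ} (hne : i ≠ inf) (r : ℝ) :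
    lamMap {i} {inf} inf '' seg i r = seg inf r := by
  ext τ
  constructor
  · rintro ⟨σ, ⟨h0, hr⟩, rfl⟩
    refine ⟨fun j hj => ?_, ?_⟩
    · simp [lamMap, hj]
    · simpa [lamMap, Finset.sum_singleton] using hr
  · rintro ⟨h0, hr⟩
    refine ⟨vtx i (τ inf), vtx_mem_seg hr, ?_⟩
    funext j
    by_cases hj : j = inf
    · subst hj
      simp [lamMap, vtx]
    · simp [lamMap, hj, h0 j hj]

lemma sub_e_seg (inf : ℕ) (r : ℝ) :
    (fun σ => σ - eVec inf) '' seg inf r = seg inf (r - 1) := by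
  ext τ
  constructor
  · rintro ⟨σ, ⟨h0, hr⟩, rfl⟩
    refine ⟨fun j hj => ?_, ?_⟩
    · simp [eVec, hj, h0 j hj]
    · show r - 1 ≤ (σ - eVec inf) inf
      have : (σ - eVec inf) inf = σ inf - 1 := by simp [eVec]
      rw [this]; linarith
  · rintro ⟨h0, hr⟩
    refine ⟨τ + eVec inf, ⟨fun j hj => ?_, ?_⟩, by funext j; simp⟩
    · simp [eVec, hj, h0 j hj]
    · have : (τ + eVec inf) inf = τ inf + 1 := by simp [eVec]
      rw [this]; linarith

lemma restrict_seg (i : ℕ) (r : ℝ) :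
    (fun σ => fun j => if j ∈ ({i} : Finset ℕ) then σ j else 0) '' seg i r = seg i r := by
  have key : ∀ σ ∈ seg i r, (fun j => if j ∈ ({i} : Finset ℕ) then σ j else 0) = σ := by
    rintro σ ⟨h0, _⟩
    funext j
    by_cases hj : j = i
    · simp [hj]
    · simp [hj, h0 j hj]
  ext τ
  constructor
  · rintro ⟨σ, hσ, rfl⟩
    show (fun j => if j ∈ ({i} : Finset ℕ) then σ j else 0) ∈ seg i r
    rw [key σ hσ]; exact hσ
  · intro hτ
    exact ⟨τ, hτ, key τ hτ⟩

lemma restrict_empty_image {S : Set Vec} (hS : S.Nonempty) :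
    (fun σ => fun j => if j ∈ (∅ : Finset ℕ) then σ j else 0) '' S = {fun _ => (0:ℝ)} := by
  ext τ
  constructor
  · rintro ⟨σ, _, rfl⟩
    simp
  · rintro rfl
    obtain ⟨σ, hσ⟩ := hS
    exact ⟨σ, hσ, by funext j; simp⟩

lemma delta_empty (D : PolySys) (h : ∅ ∈ D.F.H) : D.Δ ∅ = {fun _ => (0:ℝ)} := by
  obtain ⟨A, hA, hΔ⟩ := D.char ∅ h
  have hcone : suppCone (∅ : Finset ℕ) = {fun _ => (0:ℝ)} := by
    ext σ
    constructor
    · rintro ⟨_, h2⟩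
      funext j
      exact h2 j (by simp)
    · rintro rfl
      exact ⟨fun j => le_rfl, fun j _ => rfl⟩
  have hA' : A ⊆ {fun _ => (0:ℝ)} := fun a ha => hcone ▸ (hA ha).1
  have hne := D.nonempty ∅ h
  rw [hΔ] at hne ⊢
  have hAne : A.Nonempty := by
    by_contra hc
    rw [Set.not_nonempty_iff_eq_empty] at hc
    subst hc
    rw [posHull, Set.empty_add, convexHull_empty] at hne
    exact Set.not_nonempty_empty hne
  have hAeq : A = {fun _ => (0:ℝ)} := Set.Nonempty.subset_singleton_iff hAne |>.mp hA' 
  rw [posHull, hAeq, hcone]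
  rw [Set.singleton_add_singleton]
  have : (fun (_:ℕ) => (0:ℝ)) + (fun _ => (0:ℝ)) = (fun (_:ℕ) => (0:ℝ)) := by
    funext j; simp
  rw [this, convexHull_singleton]

lemma blowupH_eq {H : Set (Finset ℕ)} {i inf : ℕ}
    (hdim : ∀ J ∈ H, J.card ≤ 1) (hiH : {i} ∈ H) :
    blowupH H {i} inf = {K | K ∈ H ∧ i ∉ K} ∪ {({inf} : Finset ℕ)} := by
  ext J'
  constructor
  · rintro (⟨hJH, hJi⟩ | ⟨K, ⟨hKH, hKi⟩, A, hA, rfl⟩)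
    · exact Or.inl ⟨hJH, fun hi => hJi (Finset.singleton_subset_iff.mpr hi)⟩
    · right
      have hK : K = {i} := by
        have h1 : i ∈ K := Finset.singleton_subset_iff.mp hKi
        have h2 := hdim K hKH
        exact Finset.eq_singleton_iff_unique_mem.mpr
          ⟨h1, fun x hx => Finset.card_le_one.mp h2 x hx i h1⟩
      have hA' : A = ∅ := Finset.eq_empty_of_ssubset_singleton hA
      subst hK; subst hA'
      simp
  · rintro (⟨hJH, hJi⟩ | hJ)
    · exact Or.inl ⟨hJH, fun h => hJi (Finset.singleton_subset_iff.mp h)⟩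
    · rw [Set.mem_singleton_iff] at hJ
      subst hJ
      exact Or.inr ⟨{i}, ⟨hiH, le_rfl⟩, ∅, Finset.empty_ssubset.mpr (Finset.singleton_nonempty i),
        by simp⟩

lemma charΔ_old (D : PolySys) {i inf : ℕ} {K : Finset ℕ} (h : inf ∉ K) :
    charΔ D {i} inf K = D.Δ K := if_neg h

lemma charΔ_inf (D : PolySys) {i inf : ℕ} (hne : i ≠ inf) {m : ℕ}
    (hΔi : D.Δ {i} = seg i ((m : ℝ) / D.d)) :
    charΔ D {i} inf {inf} = seg inf ((m : ℝ) / D.d - 1) := by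
  rw [charΔ, if_pos (Finset.mem_singleton_self inf)]
  have hbd : blowdown {i} inf {inf} = {i} := by
    rw [blowdown, if_pos (Finset.mem_singleton_self inf)]
    simp
  rw [hbd, hΔi, lam_image_seg hne, posHull_seg (le_refl (seg inf ((m:ℝ)/D.d))) (vtx_mem_seg le_rfl),
    sub_e_seg]



section TransSys

variable (D : PolySys) (i inf : ℕ) (m : ℕ)

/-- The characteristic transform of a one-dimensional system, centered at `{i}`. -/
noncomputable def transSys
    (hdim : ∀ J ∈ D.F.H, J.card ≤ 1) (hiH : {i} ∈ D.F.H) (hinf : inf ∉ D.F.I)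
    (hΔi : D.Δ {i} = seg i ((m : ℝ) / D.d)) (hm : D.d ≤ m) : PolySys where
  F :=
    { I := insert inf D.F.I
      I_nonempty := Finset.insert_nonempty _ _
      H := blowupH D.F.H {i} inf
      mem_sub := by
        rw [blowupH_eq hdim hiH]
        rintro J (⟨hJH, _⟩ | hJ)
        · exact (D.F.mem_sub J hJH).trans (Finset.subset_insert _ _)
        · rw [Set.mem_singleton_iff] at hJ
          subst hJ
          simp
      downward := by
        rw [blowupH_eq hdim hiH]
        rintro J (⟨hJH, hJi⟩ | hJ) K hK
        · exact Or.inl ⟨D.F.downward J hJH K hK, fun h => hJi (hK h)⟩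
        · rw [Set.mem_singleton_iff] at hJ
          subst hJ
          rcases Finset.subset_singleton_iff.mp hK with rfl | rfl
          · exact Or.inl ⟨D.F.downward {i} hiH ∅ (Finset.empty_subset _),
              Finset.notMem_empty i⟩
          · exact Or.inr rfl }
  d := D.d
  d_pos := D.d_pos
  Δ := charΔ D {i} inf
  char := by
    intro J hJ
    replace hJ : J ∈ {K | K ∈ D.F.H ∧ i ∉ K} ∪ {({inf} : Finset ℕ)} :=
      (blowupH_eq hdim hiH) ▸ hJ
    rcases hJ with ⟨hJH, _⟩ | hJ
    · have hinfJ : inf ∉ J := fun h => hinf (D.F.mem_sub J hJH h)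
      rw [charΔ_old D hinfJ]
      exact D.char J hJH
    · rw [Set.mem_singleton_iff] at hJ
      subst hJ
      have hii : i ≠ inf := fun h => hinf (h ▸ D.F.mem_sub {i} hiH (Finset.mem_singleton_self i))
      rw [charΔ_inf D hii hΔi]
      have hd : ((D.d : ℝ)) ≠ 0 := Nat.cast_ne_zero.mpr D.d_pos.ne'
      have hcast : (m:ℝ)/D.d - 1 = ((m - D.d : ℕ):ℝ)/D.d := by
        rw [Nat.cast_sub hm, sub_div, div_self hd]
      rw [hcast]
      exact isCharPoly_seg D.d_pos
  nonempty := by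
    intro J hJ
    replace hJ : J ∈ {K | K ∈ D.F.H ∧ i ∉ K} ∪ {({inf} : Finset ℕ)} :=
      (blowupH_eq hdim hiH) ▸ hJ
    rcases hJ with ⟨hJH, _⟩ | hJ
    · have hinfJ : inf ∉ J := fun h => hinf (D.F.mem_sub J hJH h)
      rw [charΔ_old D hinfJ]
      exact D.nonempty J hJH
    · rw [Set.mem_singleton_iff] at hJ
      subst hJ
      have hii : i ≠ inf := fun h => hinf (h ▸ D.F.mem_sub {i} hiH (Finset.mem_singleton_self i))
      rw [charΔ_inf D hii hΔi]
      exact ⟨vtx inf ((m:ℝ)/D.d - 1), vtx_mem_seg le_rfl⟩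
  compat := by
    intro J₁ hJ₁ J₂ hJ₂ h12
    replace hJ₂ : J₂ ∈ {K | K ∈ D.F.H ∧ i ∉ K} ∪ {({inf} : Finset ℕ)} :=
      (blowupH_eq hdim hiH) ▸ hJ₂
    clear hJ₁
    have hii : i ≠ inf := fun h => hinf (h ▸ D.F.mem_sub {i} hiH (Finset.mem_singleton_self i))
    rcases hJ₂ with ⟨hJ₂H, _⟩ | hJ₂
    · -- old stratum: J₁ is also old
      have hJ₁H : J₁ ∈ D.F.H := D.F.downward J₂ hJ₂H J₁ h12
      have h1 : inf ∉ J₁ := fun h => hinf (D.F.mem_sub J₁ hJ₁H h)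
      have h2 : inf ∉ J₂ := fun h => hinf (D.F.mem_sub J₂ hJ₂H h)
      rw [charΔ_old D h1, charΔ_old D h2]
      exact D.compat J₁ hJ₁H J₂ hJ₂H h12
    · rw [Set.mem_singleton_iff] at hJ₂
      subst hJ₂
      rw [charΔ_inf D hii hΔi]
      rcases Finset.subset_singleton_iff.mp h12 with rfl | rfl
      · have hes : ∅ ∈ D.F.H := D.F.downward {i} hiH ∅ (Finset.empty_subset _)
        rw [charΔ_old D (Finset.notMem_empty inf), delta_empty D hes,
          restrict_empty_image ⟨vtx inf ((m:ℝ)/D.d - 1), vtx_mem_seg le_rfl⟩]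
      · rw [charΔ_inf D hii hΔi, restrict_seg]

end TransSys



section Measure

open Classical in
/-- The (finite) set of singular strata. -/
noncomputable def singF (D : PolySys) : Finset (Finset ℕ) :=
  D.F.I.powerset.filter (fun J => J ∈ Sing D)

lemma mem_singF {D : PolySys} {J : Finset ℕ} : J ∈ singF D ↔ J ∈ Sing D := by
  classical
  simp only [singF, Finset.mem_filter, Finset.mem_powerset]
  exact ⟨fun h => h.2, fun h => ⟨D.F.mem_sub J h.1, h⟩⟩

/-- The termination measure. -/
noncomputable def mu (D : PolySys) : ℕ :=
  ∑ J ∈ singF D, ⌊contactExp J (D.Δ J)⌋₊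

end Measure

section TransSysProps

variable {D : PolySys} {i inf : ℕ} {m : ℕ}
  (hdim : ∀ J ∈ D.F.H, J.card ≤ 1) (hiH : {i} ∈ D.F.H) (hinf : inf ∉ D.F.I)
  (hΔi : D.Δ {i} = seg i ((m : ℝ) / D.d)) (hm : D.d ≤ m)

lemma transSys_charTransform (hiS : {i} ∈ Sing D) :
    IsCharTransformAt D (transSys D i inf m hdim hiH hinf hΔi hm) {i} inf :=
  ⟨hiS, rfl, hinf, rfl, rfl, fun _ _ => rfl⟩

lemma transSys_dim :
    ∀ J ∈ (transSys D i inf m hdim hiH hinf hΔi hm).F.H, J.card ≤ 1 := by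
  intro J hJ
  replace hJ : J ∈ {K | K ∈ D.F.H ∧ i ∉ K} ∪ {({inf} : Finset ℕ)} :=
    (blowupH_eq hdim hiH) ▸ hJ
  rcases hJ with ⟨hJH, _⟩ | hJ
  · exact hdim J hJH
  · rw [Set.mem_singleton_iff] at hJ
    subst hJ
    simp

lemma transSys_sing_old {K : Finset ℕ} (hK : K ≠ {inf}) :
    K ∈ Sing (transSys D i inf m hdim hiH hinf hΔi hm) ↔ K ∈ Sing D ∧ i ∉ K := by
  set D' := transSys D i inf m hdim hiH hinf hΔi hm with hD'
  constructor
  · rintro ⟨hKH, hδ⟩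
    replace hKH : K ∈ {K | K ∈ D.F.H ∧ i ∉ K} ∪ {({inf} : Finset ℕ)} :=
      (blowupH_eq hdim hiH) ▸ hKH
    rcases hKH with ⟨hKH, hiK⟩ | h
    · have hinfK : inf ∉ K := fun h => hinf (D.F.mem_sub K hKH h)
      have hΔ : D'.Δ K = D.Δ K := charΔ_old D hinfK
      rw [hΔ] at hδ
      exact ⟨⟨hKH, hδ⟩, hiK⟩
    · exact absurd h hK
  · rintro ⟨⟨hKH, hδ⟩, hiK⟩
    have hinfK : inf ∉ K := fun h => hinf (D.F.mem_sub K hKH h)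
    have hH' : K ∈ D'.F.H := by
      show K ∈ blowupH D.F.H {i} inf
      rw [blowupH_eq hdim hiH]
      exact Or.inl ⟨hKH, hiK⟩
    have hΔ : D'.Δ K = D.Δ K := charΔ_old D hinfK
    exact ⟨hH', by rw [hΔ]; exact hδ⟩

lemma transSys_sing_inf :
    {inf} ∈ Sing (transSys D i inf m hdim hiH hinf hΔi hm) ↔ 1 ≤ (m : ℝ) / D.d - 1 := by
  set D' := transSys D i inf m hdim hiH hinf hΔi hm with hD'
  have hii : i ≠ inf := fun h => hinf (h ▸ D.F.mem_sub {i} hiH (Finset.mem_singleton_self i))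
  have hH' : {inf} ∈ D'.F.H := by
    show {inf} ∈ blowupH D.F.H {i} inf
    rw [blowupH_eq hdim hiH]
    exact Or.inr rfl
  have hΔ : D'.Δ {inf} = seg inf ((m : ℝ) / D.d - 1) := charΔ_inf D hii hΔi
  constructor
  · rintro ⟨_, hδ⟩
    rwa [hΔ, contact_seg] at hδ
  · intro h
    exact ⟨hH', by rw [hΔ, contact_seg]; exact h⟩

lemma transSys_mu_lt (hiS : {i} ∈ Sing D) :
    mu (transSys D i inf m hdim hiH hinf hΔi hm) < mu D := by
  classical
  set D' := transSys D i inf m hdim hiH hinf hΔi hm with hD'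
  have hd : 0 < D.d := D.d_pos
  have hdR : (0:ℝ) < D.d := by exact_mod_cast hd
  have hii : i ≠ inf := fun h => hinf (h ▸ D.F.mem_sub {i} hiH (Finset.mem_singleton_self i))
  have hins : ∀ K ∈ Sing D, K ≠ {i} → i ∉ K := by
    intro K hK hKne hiK
    apply hKne
    exact Finset.eq_singleton_iff_unique_mem.mpr
      ⟨hiK, fun x hx => Finset.card_le_one.mp (hdim K hK.1) x hx i hiK⟩
  have hnotinf : ∀ K ∈ Sing D, inf ∉ K := fun K hK h => hinf (D.F.mem_sub K hK.1 h)
  have h1 : {i} ∈ singF D := mem_singF.mpr hiS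
  have h2 : {inf} ∉ (singF D).erase {i} := by
    intro h
    exact hnotinf {inf} (mem_singF.mp (Finset.mem_of_mem_erase h))
      (Finset.mem_singleton_self inf)
  -- weights agree on old strata
  have hcongr : ∀ K ∈ (singF D).erase {i},
      ⌊contactExp K (D'.Δ K)⌋₊ = ⌊contactExp K (D.Δ K)⌋₊ := by
    intro K hK
    have hKS : K ∈ Sing D := mem_singF.mp (Finset.mem_of_mem_erase hK)
    have : D'.Δ K = D.Δ K := charΔ_old D (hnotinf K hKS)
    rw [this]
  -- weight of {i} in D
  have hwid : ⌊contactExp {i} (D.Δ {i})⌋₊ = m / D.d := by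
    rw [hΔi, contact_seg]
    rw [show ((D.d : ℝ)) = ((D.d : ℕ) : ℝ) from rfl, Nat.floor_div_natCast, Nat.floor_natCast]
  have hw1 : 1 ≤ m / D.d := (Nat.one_le_div_iff hd).mpr hm
  have hmuD : mu D = ⌊contactExp {i} (D.Δ {i})⌋₊ + ∑ K ∈ (singF D).erase {i},
      ⌊contactExp K (D.Δ K)⌋₊ := (Finset.add_sum_erase _ _ h1).symm
  by_cases hc : {inf} ∈ Sing D'
  · -- new stratum is singular
    have hset : singF D' = insert {inf} ((singF D).erase {i}) := by
      ext K
      rw [Finset.mem_insert, Finset.mem_erase, mem_singF, mem_singF]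
      constructor
      · intro hK
        by_cases h : K = {inf}
        · exact Or.inl h
        · have := (transSys_sing_old hdim hiH hinf hΔi hm h).mp hK
          exact Or.inr ⟨fun he => this.2 (he ▸ Finset.mem_singleton_self i), this.1⟩
      · rintro (rfl | ⟨hne, hKS⟩)
        · exact hc
        · have hKne : K ≠ {inf} := fun he =>
            hnotinf K hKS (he ▸ Finset.mem_singleton_self inf)
          exact (transSys_sing_old hdim hiH hinf hΔi hm hKne).mpr ⟨hKS, hins K hKS hne⟩
    have hwinf : ⌊contactExp {inf} (D'.Δ {inf})⌋₊ = (m - D.d) / D.d := by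
      have hΔ : D'.Δ {inf} = seg inf ((m : ℝ) / D.d - 1) := charΔ_inf D hii hΔi
      have hdne : ((D.d : ℝ)) ≠ 0 := ne_of_gt hdR
      have hcast : (m:ℝ)/D.d - 1 = ((m - D.d : ℕ):ℝ)/D.d := by
        rw [Nat.cast_sub hm, sub_div, div_self hdne]
      rw [hΔ, contact_seg, hcast,
        show ((D.d : ℝ)) = ((D.d : ℕ) : ℝ) from rfl, Nat.floor_div_natCast, Nat.floor_natCast]
    have hdiv : m / D.d = (m - D.d) / D.d + 1 := by
      conv_lhs => rw [← Nat.sub_add_cancel hm]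
      rw [Nat.add_div_right _ hd]
    rw [mu, hset, Finset.sum_insert h2, Finset.sum_congr rfl hcongr, hmuD, hwinf, hwid]
    have : (m - D.d) / D.d < m / D.d := by omega
    exact Nat.add_lt_add_right this _
  · -- new stratum is not singular
    have hset : singF D' = (singF D).erase {i} := by
      ext K
      rw [Finset.mem_erase, mem_singF, mem_singF]
      constructor
      · intro hK
        have h : K ≠ {inf} := fun he => hc (he ▸ hK)
        have := (transSys_sing_old hdim hiH hinf hΔi hm h).mp hK
        exact ⟨fun he => this.2 (he ▸ Finset.mem_singleton_self i), this.1⟩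
      · rintro ⟨hne, hKS⟩
        have hKne : K ≠ {inf} := fun he =>
          hnotinf K hKS (he ▸ Finset.mem_singleton_self inf)
        exact (transSys_sing_old hdim hiH hinf hΔi hm hKne).mpr ⟨hKS, hins K hKS hne⟩
    rw [mu, hset, Finset.sum_congr rfl hcongr, hmuD, hwid]
    omega

end TransSysProps

lemma hasReduction_step {D D' : PolySys} {J : Finset ℕ}
    (h : IsCharTransform D D' J) (h' : HasReduction D') : HasReduction D := by
  obtain ⟨k, seq, h0, hstep, hend⟩ := h'
  refine ⟨k + 1, fun n => match n with | 0 => D | (m + 1) => seq m, rfl, ?_, hend⟩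
  intro n hn
  match n with
  | 0 =>
    refine ⟨J, ?_⟩
    show IsCharTransform D (seq 0) J
    rw [h0]; exact h
  | (n + 1) => exact hstep n (by omega)


/-- CRS(1): every polyhedra system of dimension at most 1 admits a reduction of
singularities. -/
theorem crs_one (D : PolySys) (hdim : D.F.dim ≤ 1) : HasReduction D := by
  have hcard : ∀ J ∈ D.F.H, J.card ≤ 1 := by
    intro J hJ
    refine le_trans ?_ hdim
    refine le_csSup ?_ ⟨J, hJ, rfl⟩
    refine ⟨D.F.I.card, ?_⟩
    rintro n ⟨K, hK, rfl⟩
    exact Finset.card_le_card (D.F.mem_sub K hK)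
  have key : ∀ n : ℕ, ∀ D : PolySys, (∀ J ∈ D.F.H, J.card ≤ 1) → mu D ≤ n →
      HasReduction D := by
    intro n
    induction n with
    | zero =>
      intro D hcard hmu
      have hs : Sing D = ∅ := by
        rw [Set.eq_empty_iff_forall_notMem]
        intro K hK
        have h1 : 1 ≤ ⌊contactExp K (D.Δ K)⌋₊ := Nat.le_floor (by exact_mod_cast hK.2)
        have h2 : ⌊contactExp K (D.Δ K)⌋₊ ≤ mu D := by
          rw [mu]
          exact Finset.single_le_sum (f := fun J => ⌊contactExp J (D.Δ J)⌋₊)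
            (fun _ _ => Nat.zero_le _) (mem_singF.mpr hK)
        omega
      exact ⟨0, fun _ => D, rfl, fun i hi => absurd hi (Nat.not_lt_zero i), hs⟩
    | succ n ihn =>
      intro D hcard hmu
      by_cases hs : Sing D = ∅
      · exact ⟨0, fun _ => D, rfl, fun i hi => absurd hi (Nat.not_lt_zero i), hs⟩
      · obtain ⟨J, hJ⟩ := Set.nonempty_iff_ne_empty.mpr hs
        have hJH := hJ.1
        have hJne : J ≠ ∅ := by
          rintro rfl
          have h2 := hJ.2
          rw [contactExp, if_pos rfl] at h2
          linarith
        have hcard1 : J.card = 1 :=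
          le_antisymm (hcard J hJH)
            (Finset.card_pos.mpr (Finset.nonempty_iff_ne_empty.mpr hJne))
        obtain ⟨i, rfl⟩ := Finset.card_eq_one.mp hcard1
        obtain ⟨m, hΔi⟩ := charpoly_singleton D.d_pos (D.char _ hJH) (D.nonempty _ hJH)
        have hdR : (0:ℝ) < D.d := by exact_mod_cast D.d_pos
        have hδ : (1:ℝ) ≤ (m:ℝ) / D.d := by
          have h2 := hJ.2
          rwa [hΔi, contact_seg] at h2
        have hm : D.d ≤ m := by
          have := (one_le_div hdR).mp hδ
          exact_mod_cast this
        set inf := D.F.I.sup id + 1 with hinfdef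
        have hinf : inf ∉ D.F.I := by
          intro h
          have := Finset.le_sup (f := id) h
          simp only [id] at this
          omega
        set D' := transSys D i inf m hcard hJH hinf hΔi hm with hD'
        have hct : IsCharTransform D D' {i} :=
          ⟨inf, transSys_charTransform hcard hJH hinf hΔi hm hJ⟩
        have hlt : mu D' < mu D := transSys_mu_lt hcard hJH hinf hΔi hm hJ
        exact hasReduction_step hct
          (ihn D' (transSys_dim hcard hJH hinf hΔi hm) (by omega))
  exact key (mu D) D hcard le_rfl

end RedSing
end

section
/- The set of weakly decreasing sequences of natural numbers (functions φ : ℕ → ℕ with φ(n) ≥ φ(n+1) for all n) is well-ordered by the lexicographic order: every weakly decreasing (with respect to the lexicographic order) sequence of such sequences is eventually constant; equivalently, there is no infinite strictly lexicographically decreasing chain of weakly decreasing sequences of natural numbers. -/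
open scoped Pointwise

namespace RedSing

private lemma lex_aux : ∀ (c : ℕ) (f : ℕ → ℕ → ℕ),
    (∀ k, WeaklyDecr (f k)) →
    (∀ k, LexLt (f (k + 1)) (f k) ∨ f (k + 1) = f k) →
    (∀ k n, f k n ≤ c) →
    ∃ N, ∀ m, N ≤ m → f m = f N := by
  intro c
  induction c with
  | zero =>
    intro f _ _ hb
    refine ⟨0, fun m _ => funext fun n => ?_⟩
    have h1 := hb m n; have h2 := hb 0 n; omega
  | succ c ih =>
    intro f hw hc hb
    by_cases h : ∃ k n, f k n ≤ c
    · obtain ⟨k₀, n₀, hk₀⟩ := h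
      set f' : ℕ → ℕ → ℕ := fun k => f (k₀ + k) with hf'
      have hw' : ∀ k, WeaklyDecr (f' k) := fun k => hw _
      have hc' : ∀ k, LexLt (f' (k + 1)) (f' k) ∨ f' (k + 1) = f' k := by
        intro k
        have : k₀ + (k + 1) = (k₀ + k) + 1 := rfl
        simpa [hf', this] using hc (k₀ + k)
      have hb' : ∀ k n, f' k n ≤ c + 1 := fun k n => hb _ n
      have hex : ∀ k, ∃ n, f' k n ≤ c := by
        intro k
        induction k with
        | zero => exact ⟨n₀, by simpa [hf'] using hk₀⟩
        | succ k ihk =>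
          obtain ⟨n, hn⟩ := ihk
          rcases hc' k with hL | hE
          · obtain ⟨m, hm, _⟩ := hL
            exact ⟨m, by have := hb' k m; omega⟩
          · exact ⟨n, by rw [hE]; exact hn⟩
      set t : ℕ → ℕ := fun k => Nat.find (hex k) with htdef
      have ht : ∀ k, f' k (t k) ≤ c := fun k => Nat.find_spec (hex k)
      have hpre : ∀ k m, m < t k → f' k m = c + 1 := by
        intro k m hm
        have h1 := Nat.find_min (hex k) hm
        have h2 := hb' k m
        omega
      have hant : ∀ k, t (k + 1) ≤ t k := by
        intro k
        rcases hc' k with hL | hE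
        · obtain ⟨n, hn, hmeq⟩ := hL
          have h1 : t (k + 1) ≤ n :=
            Nat.find_le (show f' (k + 1) n ≤ c by have := hb' k n; omega)
          rcases le_or_gt n (t k) with h2 | h2
          · omega
          · exact Nat.find_le (by rw [hmeq (t k) h2]; exact ht k)
        · exact Nat.find_le (by rw [hE]; exact ht k)
      have htanti : Antitone t := antitone_nat_of_succ_le hant
      obtain ⟨K, hK⟩ : ∃ k, t k = sInf (Set.range t) := Nat.sInf_mem (Set.range_nonempty t)
      set T : ℕ := t K with hTdef
      have hconst : ∀ k, K ≤ k → t k = T := by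
        intro k hk
        have h1 : t k ≤ T := htanti hk
        have h2 : sInf (Set.range t) ≤ t k := Nat.sInf_le ⟨k, rfl⟩
        omega
      set g : ℕ → ℕ → ℕ := fun k n => f' (K + k) (n + T) with hgdef
      have hgw : ∀ k, WeaklyDecr (g k) := by
        intro k n
        have : n + 1 + T = (n + T) + 1 := by ring
        simpa [hgdef, this] using hw' (K + k) (n + T)
      have hgb : ∀ k n, g k n ≤ c := by
        intro k n
        have h1 : f' (K + k) (n + T) ≤ f' (K + k) T :=
          antitone_nat_of_succ_le (hw' (K + k)) (Nat.le_add_left T n)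
        have h2 : f' (K + k) (t (K + k)) ≤ c := ht (K + k)
        rw [hconst (K + k) (Nat.le_add_right K k)] at h2
        simpa [hgdef] using le_trans h1 h2
      have hgc : ∀ k, LexLt (g (k + 1)) (g k) ∨ g (k + 1) = g k := by
        intro k
        have hstep := hc' (K + k)
        have hidx : K + (k + 1) = (K + k) + 1 := rfl
        rcases hstep with hL | hE
        · obtain ⟨n, hn, hmeq⟩ := hL
          have hTn : T ≤ n := by
            by_contra hcon
            push_neg at hcon
            have e1 : f' (K + k + 1) n = c + 1 := by
              apply hpre
              rw [hconst (K + k + 1) (by omega)]; exact hcon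
            have e2 : f' (K + k) n = c + 1 := by
              apply hpre
              rw [hconst (K + k) (by omega)]; exact hcon
            omega
          left
          refine ⟨n - T, ?_, ?_⟩
          · have : n - T + T = n := Nat.sub_add_cancel hTn
            simpa [hgdef, hidx, this] using hn
          · intro m hm
            have hmn : m + T < n := by omega
            simpa [hgdef, hidx] using hmeq (m + T) hmn
        · right
          funext n
          simp only [hgdef, hidx, hE]
      obtain ⟨N', hN'⟩ := ih g hgw hgc hgb
      have hfix : ∀ j, N' ≤ j → f' (K + j) = f' (K + N') := by
        intro j hj
        funext n
        rcases lt_or_ge n T with hn | hn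
        · have e1 : f' (K + j) n = c + 1 := by
            apply hpre; rw [hconst (K + j) (by omega)]; exact hn
          have e2 : f' (K + N') n = c + 1 := by
            apply hpre; rw [hconst (K + N') (by omega)]; exact hn
          omega
        · have hnT : n - T + T = n := Nat.sub_add_cancel hn
          have := congrFun (hN' j hj) (n - T)
          simpa [hgdef, hnT] using this
      refine ⟨k₀ + K + N', fun m hm => ?_⟩
      have hm1 : k₀ + (K + (m - k₀ - K)) = m := by omega
      have hm2 : N' ≤ m - k₀ - K := by omega
      have := hfix (m - k₀ - K) hm2
      simp only [hf'] at this
      calc f m = f (k₀ + (K + (m - k₀ - K))) := by rw [hm1]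
        _ = f (k₀ + (K + N')) := this
        _ = f (k₀ + K + N') := by ring_nf
    · push_neg at h
      refine ⟨0, fun m _ => funext fun n => ?_⟩
      have h1 := h m n; have h2 := h 0 n
      have h3 := hb m n; have h4 := hb 0 n
      omega

/-- The set of weakly decreasing sequences of naturals is well-ordered by the
lexicographic order: every lexicographically weakly decreasing sequence of such
sequences is eventually constant. -/
theorem decreasing_nat_sequences_wellOrdered (f : ℕ → ℕ → ℕ)
    (hdec : ∀ k, WeaklyDecr (f k))
    (hchain : ∀ k, LexLt (f (k + 1)) (f k) ∨ f (k + 1) = f k) :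
    ∃ N, ∀ m, N ≤ m → f m = f N := by
  have h0 : ∀ k, f k 0 ≤ f 0 0 := by
    intro k
    induction k with
    | zero => exact le_refl _
    | succ k ihk =>
      rcases hchain k with hL | hE
      · obtain ⟨n, hn, hmeq⟩ := hL
        rcases Nat.eq_zero_or_pos n with rfl | hpos
        · omega
        · rw [hmeq 0 hpos]; exact ihk
      · rw [hE]; exact ihk
  have hb : ∀ k n, f k n ≤ f 0 0 := fun k n =>
    le_trans (antitone_nat_of_succ_le (hdec k) (Nat.zero_le n)) (h0 k)
  exact lex_aux (f 0 0) f hdec hchain hb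

end RedSing
end

section
/- Every Hironaka quasi-ordinary polyhedra system admits a reduction of singularities. -/
open scoped Pointwise

namespace RedSing

/-! ### Auxiliary development for the proof -/

section Aux

/-- Restriction of a vector to a stratum. -/
def restrictV (J : Finset ℕ) (σ : Vec) : Vec := fun j => if j ∈ J then σ j else 0

/-- The polyhedron with single vertex `v`. -/
def vertSet (J : Finset ℕ) (v : Vec) : Set Vec := {τ | ∃ ρ ∈ suppCone J, τ = v + ρ}

lemma zero_mem_suppCone (J : Finset ℕ) : (0 : Vec) ∈ suppCone J :=
  ⟨fun _ => le_refl 0, fun _ _ => rfl⟩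

lemma add_mem_suppCone {J : Finset ℕ} {ρ₁ ρ₂ : Vec} (h₁ : ρ₁ ∈ suppCone J)
    (h₂ : ρ₂ ∈ suppCone J) : ρ₁ + ρ₂ ∈ suppCone J :=
  ⟨fun j => add_nonneg (h₁.1 j) (h₂.1 j), fun j hj => by
    simp [Pi.add_apply, h₁.2 j hj, h₂.2 j hj]⟩

lemma smul_mem_suppCone {J : Finset ℕ} {a : ℝ} {ρ : Vec} (ha : 0 ≤ a)
    (h : ρ ∈ suppCone J) : a • ρ ∈ suppCone J :=
  ⟨fun j => mul_nonneg ha (h.1 j), fun j hj => by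
    simp [Pi.smul_apply, h.2 j hj]⟩

lemma mem_vertSet_self {J : Finset ℕ} (v : Vec) : v ∈ vertSet J v :=
  ⟨0, zero_mem_suppCone J, (add_zero v).symm⟩

lemma convex_suppCone (J : Finset ℕ) : Convex ℝ (suppCone J) := by
  intro x hx y hy a b ha hb _
  exact add_mem_suppCone (smul_mem_suppCone ha hx) (smul_mem_suppCone hb hy)

lemma convex_vertSet (J : Finset ℕ) (v : Vec) : Convex ℝ (vertSet J v) := by
  rintro x ⟨ρ₁, h₁, rfl⟩ y ⟨ρ₂, h₂, rfl⟩ a b ha hb hab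
  refine ⟨a • ρ₁ + b • ρ₂,
    add_mem_suppCone (smul_mem_suppCone ha h₁) (smul_mem_suppCone hb h₂), ?_⟩
  funext j
  have : a + b = 1 := hab
  simp only [Pi.add_apply, Pi.smul_apply, smul_eq_mul]
  linear_combination (v j) * this

lemma singleton_add_suppCone (J : Finset ℕ) (v : Vec) :
    ({v} : Set Vec) + suppCone J = vertSet J v := by
  ext τ
  simp only [Set.mem_add, Set.mem_singleton_iff, vertSet, Set.mem_setOf_eq]
  constructor
  · rintro ⟨x, rfl, ρ, hρ, rfl⟩; exact ⟨ρ, hρ, rfl⟩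
  · rintro ⟨ρ, hρ, rfl⟩; exact ⟨v, rfl, ρ, hρ, rfl⟩

lemma posHull_singleton (J : Finset ℕ) (v : Vec) : posHull J {v} = vertSet J v := by
  rw [posHull, singleton_add_suppCone]
  exact (convex_vertSet J v).convexHull_eq

lemma posHull_mono {J : Finset ℕ} {A B : Set Vec} (h : A ⊆ B) :
    posHull J A ⊆ posHull J B :=
  convexHull_mono (Set.add_subset_add_right h)

lemma subset_posHull (J : Finset ℕ) (A : Set Vec) : A ⊆ posHull J A := by
  intro a ha
  apply subset_convexHull
  exact ⟨a, ha, 0, zero_mem_suppCone J, add_zero a⟩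

lemma vertSet_add_suppCone_subset (J : Finset ℕ) (v : Vec) :
    vertSet J v + suppCone J ⊆ vertSet J v := by
  rintro x ⟨τ, ⟨ρ, hρ, rfl⟩, ρ', hρ', rfl⟩
  exact ⟨ρ + ρ', add_mem_suppCone hρ hρ', add_assoc v ρ ρ'⟩

lemma posHull_squeeze {J : Finset ℕ} {S : Set Vec} {v : Vec} (h1 : v ∈ S)
    (h2 : S ⊆ vertSet J v) : posHull J S = vertSet J v := by
  apply subset_antisymm
  · apply convexHull_min _ (convex_vertSet J v)
    exact (Set.add_subset_add_right h2).trans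
      (by simpa using vertSet_add_suppCone_subset J v) |>.trans (le_refl _)
  · rw [← posHull_singleton]
    exact posHull_mono (Set.singleton_subset_iff.mpr h1)

lemma vertSet_inj {J : Finset ℕ} {u v : Vec} (h : vertSet J u = vertSet J v) : u = v := by
  obtain ⟨ρ, hρ, hu⟩ : u ∈ vertSet J v := h ▸ mem_vertSet_self u
  obtain ⟨ρ', hρ', hv⟩ : v ∈ vertSet J u := h.symm ▸ mem_vertSet_self v
  funext j
  have h1 := congrFun hu j
  have h2 := congrFun hv j
  simp only [Pi.add_apply] at h1 h2
  have := hρ.1 j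
  have := hρ'.1 j
  linarith

lemma restrictV_add (J : Finset ℕ) (u v : Vec) :
    restrictV J (u + v) = restrictV J u + restrictV J v := by
  funext j; by_cases h : j ∈ J <;> simp [restrictV, h]

lemma restrictV_mem_suppCone {J₁ : Finset ℕ} {ρ : Vec} (h : ∀ j, 0 ≤ ρ j) :
    restrictV J₁ ρ ∈ suppCone J₁ := by
  constructor
  · intro j; by_cases hj : j ∈ J₁ <;> simp [restrictV, hj, h j]
  · intro j hj; simp [restrictV, hj]

lemma restrictV_of_mem_suppCone {J₁ J₂ : Finset ℕ} {ρ : Vec} (hsub : J₁ ⊆ J₂)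
    (h : ρ ∈ suppCone J₁) : restrictV J₁ ρ = ρ := by
  funext j; by_cases hj : j ∈ J₁
  · simp [restrictV, hj]
  · simp [restrictV, hj, h.2 j hj]

lemma restrictV_image_vertSet {J₁ J₂ : Finset ℕ} (hsub : J₁ ⊆ J₂) (v : Vec) :
    restrictV J₁ '' vertSet J₂ v = vertSet J₁ (restrictV J₁ v) := by
  ext τ
  constructor
  · rintro ⟨σ, ⟨ρ, hρ, rfl⟩, rfl⟩
    exact ⟨restrictV J₁ ρ, restrictV_mem_suppCone hρ.1, restrictV_add J₁ v ρ⟩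
  · rintro ⟨ρ, hρ, rfl⟩
    refine ⟨v + ρ, ⟨ρ, ⟨hρ.1, fun j hj => hρ.2 j (fun hj1 => hj (hsub hj1))⟩, rfl⟩, ?_⟩
    rw [restrictV_add, restrictV_of_mem_suppCone hsub hρ]

lemma charPoly_subset {J : Finset ℕ} {d : ℕ} {Δ : Set Vec} (h : IsCharPoly J d Δ) :
    Δ ⊆ suppCone J := by
  obtain ⟨A, hA, rfl⟩ := h
  apply convexHull_min _ (convex_suppCone J)
  rintro x ⟨a, ha, ρ, hρ, rfl⟩
  exact add_mem_suppCone (hA ha).1 hρ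

lemma contactExp_vertSet {J : Finset ℕ} (hJ : J ≠ ∅) (v : Vec) :
    contactExp J (vertSet J v) = ∑ j ∈ J, v j := by
  rw [contactExp, if_neg hJ]
  apply IsLeast.csInf_eq
  constructor
  · exact ⟨v, mem_vertSet_self v, rfl⟩
  · rintro x ⟨σ, ⟨ρ, hρ, rfl⟩, rfl⟩
    simp only [Pi.add_apply, Finset.sum_add_distrib]
    have : 0 ≤ ∑ j ∈ J, ρ j := Finset.sum_nonneg fun j _ => hρ.1 j
    linarith

lemma contactExp_le_sum {J : Finset ℕ} {Δ : Set Vec} {σ : Vec}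
    (hΔ : Δ ⊆ suppCone J) (hσ : σ ∈ Δ) : contactExp J Δ ≤ ∑ j ∈ J, σ j := by
  by_cases hJ : J = ∅
  · subst hJ; rw [contactExp, if_pos rfl]; simp
  · rw [contactExp, if_neg hJ]
    apply csInf_le
    · refine ⟨0, ?_⟩
      rintro x ⟨τ, hτ, rfl⟩
      exact Finset.sum_nonneg fun j _ => (hΔ hτ).1 j
    · exact ⟨σ, hσ, rfl⟩

lemma Sing_ne_empty {D : PolySys} {J : Finset ℕ} (h : J ∈ Sing D) : J ≠ ∅ := by
  rintro rfl
  have := h.2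
  rw [contactExp, if_pos rfl] at this
  linarith

lemma one_le_sum_of_sing {D : PolySys} {J : Finset ℕ} (h : J ∈ Sing D) {σ : Vec}
    (hσ : σ ∈ D.Δ J) : 1 ≤ ∑ j ∈ J, σ j :=
  le_trans h.2 (contactExp_le_sum (charPoly_subset (D.char J h.1)) hσ)

lemma sing_upward {D : PolySys} {J₁ J₂ : Finset ℕ} (h₁ : J₁ ∈ Sing D)
    (h₂ : J₂ ∈ D.F.H) (hsub : J₁ ⊆ J₂) : J₂ ∈ Sing D := by
  refine ⟨h₂, ?_⟩
  have hJ₂ : J₂ ≠ ∅ := by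
    intro h; exact Sing_ne_empty h₁ (Finset.subset_empty.mp (h ▸ hsub))
  rw [contactExp, if_neg hJ₂]
  apply le_csInf
  · obtain ⟨σ, hσ⟩ := D.nonempty J₂ h₂
    exact ⟨_, σ, hσ, rfl⟩
  · rintro x ⟨σ, hσ, rfl⟩
    have hr : restrictV J₁ σ ∈ D.Δ J₁ := by
      rw [D.compat J₁ h₁.1 J₂ h₂ hsub]
      exact ⟨σ, hσ, rfl⟩
    have h1 : 1 ≤ ∑ j ∈ J₁, restrictV J₁ σ j := one_le_sum_of_sing h₁ hr
    have h2 : ∑ j ∈ J₁, restrictV J₁ σ j = ∑ j ∈ J₁, σ j :=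
      Finset.sum_congr rfl fun j hj => by simp [restrictV, hj]
    have h3 : ∑ j ∈ J₁, σ j ≤ ∑ j ∈ J₂, σ j :=
      Finset.sum_le_sum_of_subset_of_nonneg hsub
        (fun j _ _ => (charPoly_subset (D.char J₂ h₂) hσ).1 j)
    linarith

end Aux

section Aux2

lemma vertex_lattice {J : Finset ℕ} {d : ℕ} {A : Set Vec} {v : Vec}
    (hA : A ⊆ latticePts J d) (heq : posHull J A = vertSet J v) :
    v ∈ latticePts J d := by
  have hsub : A + suppCone J ⊆ vertSet J v := by
    rw [← heq]; exact subset_convexHull ℝ _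
  have hv : v ∈ posHull J A := heq ▸ mem_vertSet_self v
  rw [posHull, convexHull_eq] at hv
  obtain ⟨ι, t, w, z, hw0, hw1, hz, hcm⟩ := hv
  have hz' : ∀ i ∈ t, ∀ j, v j ≤ z i j := by
    intro i hi j
    obtain ⟨ρ, hρ, hzi⟩ := hsub (hz i hi)
    rw [hzi]; simp only [Pi.add_apply]; linarith [hρ.1 j]
  have hvj : ∀ j, ∑ i ∈ t, w i * (z i j - v j) = 0 := by
    intro j
    have h1 : (∑ i ∈ t, w i • z i) j = v j := by
      rw [← Finset.centerMass_eq_of_sum_1 t z hw1, hcm]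
    rw [Finset.sum_apply] at h1
    simp only [Pi.smul_apply, smul_eq_mul] at h1
    have h2 : ∑ i ∈ t, w i * (z i j - v j)
        = (∑ i ∈ t, w i * z i j) - (∑ i ∈ t, w i) * v j := by
      rw [Finset.sum_mul, ← Finset.sum_sub_distrib]
      apply Finset.sum_congr rfl; intro i _; ring
    rw [h2, h1, hw1]; ring
  obtain ⟨i₀, hi₀t, hi₀⟩ : ∃ i ∈ t, w i ≠ 0 := by
    apply Finset.exists_ne_zero_of_sum_ne_zero; rw [hw1]; norm_num
  have hzv : z i₀ = v := by
    funext j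
    have hterm := (Finset.sum_eq_zero_iff_of_nonneg (fun i hi => mul_nonneg (hw0 i hi)
      (by linarith [hz' i hi j]))).mp (hvj j) i₀ hi₀t
    rcases mul_eq_zero.mp hterm with h | h
    · exact absurd h hi₀
    · linarith
  obtain ⟨a, ha, ρ, hρ, hav⟩ := hz i₀ hi₀t
  rw [hzv] at hav
  obtain ⟨ρ', hρ', ha'⟩ : a ∈ vertSet J v := hsub ⟨a, ha, 0, zero_mem_suppCone J, add_zero a⟩
  have hva : v = a := by
    funext j
    have h1 : a j + ρ j = v j := congrFun hav j
    have h2 : a j = v j + ρ' j := congrFun ha' j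
    have := hρ.1 j; have := hρ'.1 j
    linarith
  exact hva ▸ hA ha

noncomputable def sysVtx (D : PolySys) (K : Finset ℕ) : Vec :=
  Classical.epsilon (fun σ => σ ∈ latticePts K D.d ∧ D.Δ K = vertSet K σ)

lemma sysVtx_spec {D : PolySys} (hQO : IsQuasiOrdinary D) {K : Finset ℕ}
    (hK : K ∈ Sing D) :
    sysVtx D K ∈ latticePts K D.d ∧ D.Δ K = vertSet K (sysVtx D K) := by
  obtain ⟨σ₀, hσ₀⟩ := hQO K hK
  obtain ⟨A, hA, hAeq⟩ := D.char K hK.1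
  have h1 : D.Δ K = vertSet K σ₀ := by rw [hσ₀, posHull_singleton]
  have hex : ∃ σ, σ ∈ latticePts K D.d ∧ D.Δ K = vertSet K σ :=
    ⟨σ₀, vertex_lattice hA (by rw [← hAeq, h1]), h1⟩
  exact Classical.epsilon_spec hex

lemma sysVtx_compat {D : PolySys} (hQO : IsQuasiOrdinary D) {K₁ K₂ : Finset ℕ}
    (h₁ : K₁ ∈ Sing D) (h₂ : K₂ ∈ Sing D) (hsub : K₁ ⊆ K₂) :
    sysVtx D K₁ = restrictV K₁ (sysVtx D K₂) := by
  apply vertSet_inj (J := K₁)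
  rw [← (sysVtx_spec hQO h₁).2, ← restrictV_image_vertSet hsub, ← (sysVtx_spec hQO h₂).2]
  exact D.compat K₁ h₁.1 K₂ h₂.1 hsub

lemma sysVtx_delta {D : PolySys} (hQO : IsQuasiOrdinary D) {K : Finset ℕ}
    (hK : K ∈ Sing D) :
    contactExp K (D.Δ K) = ∑ j ∈ K, sysVtx D K j := by
  rw [(sysVtx_spec hQO hK).2, contactExp_vertSet (Sing_ne_empty hK)]

lemma delta_int {D : PolySys} (hQO : IsQuasiOrdinary D) {K : Finset ℕ}
    (hK : K ∈ Sing D) :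
    ∃ n : ℕ, (D.d : ℝ) * contactExp K (D.Δ K) = n := by
  have hd : (D.d : ℝ) ≠ 0 := Nat.cast_ne_zero.mpr D.d_pos.ne'
  obtain ⟨hlat, -⟩ := sysVtx_spec hQO hK
  choose m hm using hlat.2
  refine ⟨∑ j ∈ K, m j, ?_⟩
  rw [sysVtx_delta hQO hK]
  push_cast
  rw [Finset.mul_sum]
  apply Finset.sum_congr rfl
  intro j _
  rw [hm j]
  field_simp

lemma sing_finite (D : PolySys) : (Sing D).Finite := by
  apply Set.Finite.subset (Finset.finite_toSet D.F.I.powerset)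
  intro J hJ
  simpa [Finset.mem_powerset] using D.F.mem_sub J hJ.1

noncomputable def maxδ (D : PolySys) : ℝ :=
  sSup {x | ∃ J ∈ Sing D, contactExp J (D.Δ J) = x}

lemma maxδ_spec {D : PolySys} (hne : (Sing D).Nonempty) :
    (∃ K ∈ Sing D, contactExp K (D.Δ K) = maxδ D) ∧
      ∀ J ∈ Sing D, contactExp J (D.Δ J) ≤ maxδ D := by
  have hS : {x | ∃ J ∈ Sing D, contactExp J (D.Δ J) = x}
      = (fun J => contactExp J (D.Δ J)) '' Sing D := by
    ext x; simp [Set.mem_image]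
  have hfin : {x | ∃ J ∈ Sing D, contactExp J (D.Δ J) = x}.Finite := by
    rw [hS]; exact (sing_finite D).image _
  have hne' : {x | ∃ J ∈ Sing D, contactExp J (D.Δ J) = x}.Nonempty := by
    obtain ⟨J, hJ⟩ := hne; exact ⟨_, J, hJ, rfl⟩
  constructor
  · exact hne'.csSup_mem hfin
  · intro J hJ
    exact le_csSup hfin.bddAbove ⟨J, hJ, rfl⟩

noncomputable def mu1 (D : PolySys) : ℕ := ⌊(D.d : ℝ) * maxδ D⌋₊

noncomputable def mu2 (D : PolySys) : ℕ :=
  Set.ncard {J | J ∈ Sing D ∧ contactExp J (D.Δ J) = maxδ D}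

lemma mu1_eq {D : PolySys} (hQO : IsQuasiOrdinary D) (hne : (Sing D).Nonempty) :
    ((mu1 D : ℝ)) = (D.d : ℝ) * maxδ D := by
  obtain ⟨⟨K, hK, hKeq⟩, -⟩ := maxδ_spec hne
  obtain ⟨n, hn⟩ := delta_int hQO hK
  rw [hKeq] at hn
  rw [mu1, hn, Nat.floor_natCast]

lemma hasReduction_of_sing_empty {D : PolySys} (h : Sing D = ∅) : HasReduction D :=
  ⟨0, fun _ => D, rfl, fun i hi => absurd hi (Nat.not_lt_zero i), h⟩

end Aux2

section Aux3

lemma wcoord (J J' : Finset ℕ) (inf : ℕ) (u : Vec) (j : ℕ) :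
    (lamMap J J' inf u - eVec inf) j
      = if j = inf then (∑ i ∈ J, u i) - 1 else if j ∈ J' then u j else 0 := by
  by_cases h : j = inf
  · simp [lamMap, eVec, h]
  · by_cases h2 : j ∈ J' <;> simp [lamMap, eVec, h, h2]

lemma lamMap_add (J J' : Finset ℕ) (inf : ℕ) (u ρ : Vec) :
    lamMap J J' inf (u + ρ) = lamMap J J' inf u + lamMap J J' inf ρ := by
  funext j
  by_cases h : j = inf
  · simp [lamMap, h, Finset.sum_add_distrib]
  · by_cases h2 : j ∈ J' <;> simp [lamMap, h, h2]

lemma lamMap_mem_suppCone {J J' : Finset ℕ} {inf : ℕ} (hinf : inf ∈ J') {ρ : Vec}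
    (hρ : ∀ j, 0 ≤ ρ j) : lamMap J J' inf ρ ∈ suppCone J' := by
  constructor
  · intro j
    by_cases h : j = inf
    · simp only [lamMap, h, if_pos rfl]
      exact Finset.sum_nonneg fun i _ => hρ i
    · by_cases h2 : j ∈ J' <;> simp [lamMap, h, h2, hρ j]
  · intro j hj
    have h : j ≠ inf := fun hc => hj (hc ▸ hinf)
    simp [lamMap, h, hj]

lemma charΔ_new {D : PolySys} {J J' : Finset ℕ} {inf : ℕ} (hinf : inf ∈ J')
    {v : Vec} (hv : D.Δ (blowdown J inf J') = vertSet (blowdown J inf J') v) :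
    charΔ D J inf J' = vertSet J' (lamMap J J' inf v - eVec inf) := by
  rw [charΔ, if_pos hinf, hv]
  have hsq : posHull J' (lamMap J J' inf '' vertSet (blowdown J inf J') v)
      = vertSet J' (lamMap J J' inf v) := by
    apply posHull_squeeze
    · exact ⟨v, mem_vertSet_self v, rfl⟩
    · rintro x ⟨σ, ⟨ρ, hρ, rfl⟩, rfl⟩
      exact ⟨lamMap J J' inf ρ, lamMap_mem_suppCone hinf hρ.1, lamMap_add J J' inf v ρ⟩
  rw [hsq]
  ext τ
  simp only [Set.mem_image]
  constructor
  · rintro ⟨σ, ⟨ρ, hρ, rfl⟩, rfl⟩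
    refine ⟨ρ, hρ, ?_⟩
    funext j
    simp only [Pi.sub_apply, Pi.add_apply]
    ring
  · rintro ⟨ρ, hρ, rfl⟩
    refine ⟨lamMap J J' inf v + ρ, ⟨ρ, hρ, rfl⟩, ?_⟩
    funext j
    simp only [Pi.sub_apply, Pi.add_apply]
    ring

lemma mem_blowupH_elim {H : Set (Finset ℕ)} {I : Finset ℕ} {J : Finset ℕ} {inf : ℕ}
    (hmem : ∀ K ∈ H, K ⊆ I) (hinf : inf ∉ I) {J' : Finset ℕ}
    (h : J' ∈ blowupH H J inf) :
    (inf ∉ J' ∧ J' ∈ H ∧ ¬J ⊆ J') ∨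
      (inf ∈ J' ∧ ∃ K A, K ∈ H ∧ J ⊆ K ∧ A ⊂ J ∧ J' = (K \ J) ∪ A ∪ {inf}) := by
  rcases h with ⟨hJ'H, hns⟩ | ⟨K, ⟨hKH, hJK⟩, A, hA, hJ'⟩
  · exact Or.inl ⟨fun hc => hinf (hmem J' hJ'H hc), hJ'H, hns⟩
  · refine Or.inr ⟨?_, K, A, hKH, hJK, hA, hJ'⟩
    rw [hJ']; simp

lemma blowdown_eq {K A J : Finset ℕ} {inf : ℕ} (hinfK : inf ∉ K) (hinfA : inf ∉ A)
    (hA : A ⊆ J) (hJK : J ⊆ K) :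
    blowdown J inf ((K \ J) ∪ A ∪ {inf}) = K := by
  rw [blowdown, if_pos (by simp)]
  ext j
  simp only [Finset.mem_union, Finset.mem_erase, Finset.mem_sdiff, Finset.mem_singleton]
  constructor
  · rintro (⟨hne, (⟨hjK, _⟩ | hjA) | hj⟩ | hjJ)
    · exact hjK
    · exact hJK (hA hjA)
    · exact absurd hj hne
    · exact hJK hjJ
  · intro hjK
    by_cases hjJ : j ∈ J
    · exact Or.inr hjJ
    · exact Or.inl ⟨fun h => hinfK (h ▸ hjK), Or.inl (Or.inl ⟨hjK, hjJ⟩)⟩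

end Aux3

section Aux4

lemma exists_transform (D : PolySys) (hQO : IsQuasiOrdinary D) (J : Finset ℕ)
    (hJs : J ∈ Sing D) (hmin : ∀ A, A ⊂ J → A ∉ Sing D) :
    ∃ D' : PolySys, IsCharTransform D D' J ∧ IsQuasiOrdinary D' ∧ D'.d = D.d ∧
      ∀ J'' ∈ Sing D', (¬J ⊆ J'' ∧ J'' ∈ Sing D ∧
          contactExp J'' (D'.Δ J'') = contactExp J'' (D.Δ J'')) ∨
        (∃ K ∈ Sing D, contactExp J'' (D'.Δ J'') < contactExp K (D.Δ K)) := by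
  classical
  set inf := D.F.I.sup id + 1 with hinf_def
  have hinf : inf ∉ D.F.I := by
    intro h
    have := Finset.le_sup (f := id) h
    simp only [id] at this
    omega
  have hJI : J ⊆ D.F.I := D.F.mem_sub J hJs.1
  have hinfJ : inf ∉ J := fun hc => hinf (hJI hc)
  have hup : ∀ K ∈ D.F.H, J ⊆ K → K ∈ Sing D := fun K hK hsub => sing_upward hJs hK hsub
  have hvspec : ∀ K, K ∈ Sing D →
      sysVtx D K ∈ latticePts K D.d ∧ D.Δ K = vertSet K (sysVtx D K) :=
    fun K hK => sysVtx_spec hQO hK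
  -- the sum over J of the vertex of any singular K ⊇ J is at least 1
  have honeJ : ∀ K, K ∈ D.F.H → J ⊆ K → 1 ≤ ∑ i ∈ J, sysVtx D K i := by
    intro K hKH hJK
    have hKs := hup K hKH hJK
    have h1 : 1 ≤ ∑ i ∈ J, sysVtx D J i := by
      rw [← sysVtx_delta hQO hJs]; exact hJs.2
    have h2 : ∑ i ∈ J, sysVtx D J i = ∑ i ∈ J, sysVtx D K i := by
      rw [sysVtx_compat hQO hJs hKs hJK]
      exact Finset.sum_congr rfl fun i hi => by simp [restrictV, hi]
    linarith
  -- the vertex of the transform at a new stratum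
  have hnewV : ∀ (K A J' : Finset ℕ), K ∈ D.F.H → J ⊆ K → A ⊂ J →
      J' = (K \ J) ∪ A ∪ {inf} →
      charΔ D J inf J' = vertSet J' (lamMap J J' inf (sysVtx D K) - eVec inf) := by
    intro K A J' hKH hJK hA hJ'
    subst hJ'
    have hbdK : blowdown J inf ((K \ J) ∪ A ∪ {inf}) = K :=
      blowdown_eq (fun hc => hinf (D.F.mem_sub K hKH hc))
        (fun hc => hinf (hJI (hA.subset hc))) hA.subset hJK
    apply charΔ_new (by simp)
    rw [hbdK]
    exact (hvspec K (hup K hKH hJK)).2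
  -- the new vertex is a lattice point
  have hlatw : ∀ (K A J' : Finset ℕ), K ∈ D.F.H → J ⊆ K → A ⊂ J →
      J' = (K \ J) ∪ A ∪ {inf} →
      lamMap J J' inf (sysVtx D K) - eVec inf ∈ latticePts J' D.d := by
    intro K A J' hKH hJK hA hJ'
    have hKs := hup K hKH hJK
    have hlat := (hvspec K hKs).1
    have hinfJ' : inf ∈ J' := by rw [hJ']; simp
    have hd : (0:ℝ) < (D.d : ℝ) := by exact_mod_cast D.d_pos
    choose m hm using hlat.2
    have hsumJ : ∑ i ∈ J, sysVtx D K i = (∑ i ∈ J, (m i : ℝ)) / (D.d : ℝ) := by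
      rw [Finset.sum_div]
      exact Finset.sum_congr rfl fun i _ => hm i
    have hone := honeJ K hKH hJK
    have hdm : D.d ≤ ∑ i ∈ J, m i := by
      by_contra hc
      push_neg at hc
      have h2 : (∑ i ∈ J, (m i : ℝ)) < (D.d : ℝ) := by exact_mod_cast hc
      rw [hsumJ] at hone
      have := (div_lt_one hd).mpr h2
      linarith
    constructor
    · constructor
      · intro j
        rw [wcoord]
        by_cases h : j = inf
        · rw [if_pos h]
          linarith
        · rw [if_neg h]
          by_cases h2 : j ∈ J'
          · rw [if_pos h2]; exact hlat.1.1 j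
          · rw [if_neg h2]
      · intro j hj
        rw [wcoord, if_neg (fun hc => hj (by rw [hc]; exact hinfJ')), if_neg hj]
    · intro j
      rw [wcoord]
      by_cases h : j = inf
      · refine ⟨∑ i ∈ J, m i - D.d, ?_⟩
        rw [if_pos h, hsumJ, Nat.cast_sub hdm, Nat.cast_sum]
        field_simp
      · rw [if_neg h]
        by_cases h2 : j ∈ J'
        · rw [if_pos h2]; exact ⟨m j, hm j⟩
        · rw [if_neg h2]; exact ⟨0, by simp⟩
  -- the blown-up fabric
  refine ⟨{
    F := {
      I := insert inf D.F.I
      I_nonempty := Finset.insert_nonempty _ _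
      H := blowupH D.F.H J inf
      mem_sub := ?_
      downward := ?_ }
    d := D.d
    d_pos := D.d_pos
    Δ := charΔ D J inf
    char := ?_
    nonempty := ?_
    compat := ?_ }, ⟨inf, hJs, rfl, hinf, rfl, rfl, fun J' _ => rfl⟩, ?_, rfl, ?_⟩
  · -- mem_sub
    rintro J' (⟨hJ'H, -⟩ | ⟨K, ⟨hKH, hJK⟩, A, hA, rfl⟩)
    · exact (D.F.mem_sub J' hJ'H).trans (Finset.subset_insert _ _)
    · intro j hj
      simp only [Finset.mem_union, Finset.mem_sdiff, Finset.mem_singleton] at hj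
      rcases hj with (⟨hjK, -⟩ | hjA) | rfl
      · exact Finset.mem_insert_of_mem (D.F.mem_sub K hKH hjK)
      · exact Finset.mem_insert_of_mem (hJI (hA.subset hjA))
      · exact Finset.mem_insert_self _ _
  · -- downward
    rintro J' (⟨hJ'H, hns⟩ | ⟨K, ⟨hKH, hJK⟩, A, hA, rfl⟩) J'' hsub
    · exact Or.inl ⟨D.F.downward J' hJ'H J'' hsub, fun hc => hns (hc.trans hsub)⟩
    · by_cases hi : inf ∈ J''
      · refine Or.inr ⟨(J''.erase inf) ∪ J, ⟨?_, Finset.subset_union_right⟩,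
          J'' ∩ J, ?_, ?_⟩
        · apply D.F.downward K hKH
          intro j hj
          rcases Finset.mem_union.mp hj with hj1 | hj2
          · have hj3 := hsub (Finset.mem_of_mem_erase hj1)
            have hjne : j ≠ inf := (Finset.mem_erase.mp hj1).1
            rcases Finset.mem_union.mp hj3 with hj4 | hj5
            · rcases Finset.mem_union.mp hj4 with hj6 | hj7
              · exact (Finset.mem_sdiff.mp hj6).1
              · exact hJK (hA.subset hj7)
            · exact absurd (Finset.mem_singleton.mp hj5) hjne
          · exact hJK hj2
        · -- J'' ∩ J ⊂ J
          apply Finset.ssubset_of_subset_of_ssubset _ hA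
          intro j hj
          have hj1 := Finset.mem_inter.mp hj
          have hj2 := hsub hj1.1
          rcases Finset.mem_union.mp hj2 with hj3 | hj4
          · rcases Finset.mem_union.mp hj3 with hj5 | hj6
            · exact absurd hj1.2 (Finset.mem_sdiff.mp hj5).2
            · exact hj6
          · exact absurd (hj1.2) (by rw [Finset.mem_singleton.mp hj4]; exact hinfJ)
        · -- J'' = ((erase ∪ J) \ J) ∪ (J'' ∩ J) ∪ {inf}
          ext j
          simp only [Finset.mem_union, Finset.mem_sdiff, Finset.mem_erase,
            Finset.mem_inter, Finset.mem_singleton]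
          constructor
          · intro hj
            by_cases hje : j = inf
            · exact Or.inr hje
            · by_cases hjJ : j ∈ J
              · exact Or.inl (Or.inr ⟨hj, hjJ⟩)
              · exact Or.inl (Or.inl ⟨Or.inl ⟨hje, hj⟩, hjJ⟩)
          · rintro ((⟨(⟨-, hj⟩ | hjJ), hnJ⟩ | ⟨hj, -⟩) | rfl)
            · exact hj
            · exact absurd hjJ hnJ
            · exact hj
            · exact hi
      · -- inf ∉ J''
        refine Or.inl ⟨?_, ?_⟩
        · apply D.F.downward K hKH
          intro j hj
          have hj2 := hsub hj
          rcases Finset.mem_union.mp hj2 with hj3 | hj4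
          · rcases Finset.mem_union.mp hj3 with hj5 | hj6
            · exact (Finset.mem_sdiff.mp hj5).1
            · exact hJK (hA.subset hj6)
          · exact absurd hj (by rw [Finset.mem_singleton.mp hj4]; exact hi)
        · intro hc
          apply hA.ne
          apply Finset.Subset.antisymm hA.subset
          intro j hjJ
          have hj2 := hsub (hc hjJ)
          rcases Finset.mem_union.mp hj2 with hj3 | hj4
          · rcases Finset.mem_union.mp hj3 with hj5 | hj6
            · exact absurd hjJ (Finset.mem_sdiff.mp hj5).2
            · exact hj6
          · exact absurd (Finset.mem_singleton.mp hj4 ▸ hjJ) hinfJ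
  · -- char
    intro J' hJ'
    rcases mem_blowupH_elim D.F.mem_sub hinf hJ' with ⟨hi, hH, -⟩ |
      ⟨hi, K, A, hKH, hJK, hA, hrep⟩
    · rw [charΔ, if_neg hi]
      exact D.char J' hH
    · rw [hnewV K A J' hKH hJK hA hrep]
      exact ⟨{lamMap J J' inf (sysVtx D K) - eVec inf},
        Set.singleton_subset_iff.mpr (hlatw K A J' hKH hJK hA hrep),
        (posHull_singleton _ _).symm⟩
  · -- nonempty
    intro J' hJ'
    rcases mem_blowupH_elim D.F.mem_sub hinf hJ' with ⟨hi, hH, -⟩ |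
      ⟨hi, K, A, hKH, hJK, hA, hrep⟩
    · rw [charΔ, if_neg hi]
      exact D.nonempty J' hH
    · rw [hnewV K A J' hKH hJK hA hrep]
      exact ⟨_, mem_vertSet_self _⟩
  · -- compat
    intro J₁ hJ₁ J₂ hJ₂ h12
    rcases mem_blowupH_elim D.F.mem_sub hinf hJ₁ with ⟨hi₁, hH₁, hns₁⟩ |
      ⟨hi₁, K₁, A₁, hKH₁, hJK₁, hA₁, hrep₁⟩
    · rcases mem_blowupH_elim D.F.mem_sub hinf hJ₂ with ⟨hi₂, hH₂, hns₂⟩ |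
        ⟨hi₂, K₂, A₂, hKH₂, hJK₂, hA₂, hrep₂⟩
      · rw [charΔ, if_neg hi₁, charΔ, if_neg hi₂]
        exact D.compat J₁ hH₁ J₂ hH₂ h12
      · -- old ⊆ new
        have hJ₁K₂ : J₁ ⊆ K₂ := by
          intro j hj
          have hj2 := h12 hj
          rw [hrep₂] at hj2
          rcases Finset.mem_union.mp hj2 with hj3 | hj4
          · rcases Finset.mem_union.mp hj3 with hj5 | hj6
            · exact (Finset.mem_sdiff.mp hj5).1
            · exact hJK₂ (hA₂.subset hj6)
          · exact absurd hj (by rw [Finset.mem_singleton.mp hj4]; exact hi₁)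
        rw [charΔ, if_neg hi₁, hnewV K₂ A₂ J₂ hKH₂ hJK₂ hA₂ hrep₂]
        show D.Δ J₁ = restrictV J₁ '' _
        rw [restrictV_image_vertSet h12]
        have hvv : restrictV J₁ (lamMap J J₂ inf (sysVtx D K₂) - eVec inf)
            = restrictV J₁ (sysVtx D K₂) := by
          funext j
          simp only [restrictV]
          by_cases hj : j ∈ J₁
          · have hjne : j ≠ inf := fun hc => hi₁ (by rw [← hc]; exact hj)
            rw [if_pos hj, if_pos hj, wcoord, if_neg hjne, if_pos (h12 hj)]
          · rw [if_neg hj, if_neg hj]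
        rw [hvv, D.compat J₁ hH₁ K₂ hKH₂ hJ₁K₂, (hvspec K₂ (hup K₂ hKH₂ hJK₂)).2]
        exact restrictV_image_vertSet hJ₁K₂ _
    · rcases mem_blowupH_elim D.F.mem_sub hinf hJ₂ with ⟨hi₂, hH₂, hns₂⟩ |
        ⟨hi₂, K₂, A₂, hKH₂, hJK₂, hA₂, hrep₂⟩
      · exact absurd (h12 hi₁) hi₂
      · -- new ⊆ new
        have hK₁K₂ : K₁ ⊆ K₂ := by
          intro j hj
          by_cases hjJ : j ∈ J
          · exact hJK₂ hjJ
          · have hj1 : j ∈ J₁ := by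
              rw [hrep₁]
              exact Finset.mem_union_left _ (Finset.mem_union_left _
                (Finset.mem_sdiff.mpr ⟨hj, hjJ⟩))
            have hj2 := h12 hj1
            rw [hrep₂] at hj2
            rcases Finset.mem_union.mp hj2 with hj3 | hj4
            · rcases Finset.mem_union.mp hj3 with hj5 | hj6
              · exact (Finset.mem_sdiff.mp hj5).1
              · exact absurd (hA₂.subset hj6) hjJ
            · exact absurd (Finset.mem_singleton.mp hj4 ▸ hj)
                (fun hc => hinf (D.F.mem_sub K₁ hKH₁ hc))
        have hKs₁ := hup K₁ hKH₁ hJK₁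
        have hKs₂ := hup K₂ hKH₂ hJK₂
        have hvc : sysVtx D K₁ = restrictV K₁ (sysVtx D K₂) :=
          sysVtx_compat hQO hKs₁ hKs₂ hK₁K₂
        rw [hnewV K₁ A₁ J₁ hKH₁ hJK₁ hA₁ hrep₁, hnewV K₂ A₂ J₂ hKH₂ hJK₂ hA₂ hrep₂]
        show _ = restrictV J₁ '' _
        rw [restrictV_image_vertSet h12]
        have hvv : restrictV J₁ (lamMap J J₂ inf (sysVtx D K₂) - eVec inf)
            = lamMap J J₁ inf (sysVtx D K₁) - eVec inf := by
          funext j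
          simp only [restrictV]
          by_cases hj : j ∈ J₁
          · rw [if_pos hj, wcoord, wcoord]
            by_cases hje : j = inf
            · rw [if_pos hje, if_pos hje]
              have hss : ∑ i ∈ J, sysVtx D K₁ i = ∑ i ∈ J, sysVtx D K₂ i := by
                rw [hvc]
                exact Finset.sum_congr rfl fun i hi => by
                  simp [restrictV, hJK₁ hi]
              rw [hss]
            · have hjK₁ : j ∈ K₁ := by
                have hj1 : j ∈ J₁ := hj
                rw [hrep₁] at hj1
                rcases Finset.mem_union.mp hj1 with hj3 | hj4
                · rcases Finset.mem_union.mp hj3 with hj5 | hj6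
                  · exact (Finset.mem_sdiff.mp hj5).1
                  · exact hJK₁ (hA₁.subset hj6)
                · exact absurd (Finset.mem_singleton.mp hj4) hje
              rw [if_neg hje, if_neg hje, if_pos hj, if_pos (h12 hj), hvc]
              simp [restrictV, hjK₁]
          · rw [if_neg hj, wcoord,
              if_neg (fun hc => hj (by rw [hc]; exact hi₁)), if_neg hj]
        rw [hvv]
  · -- quasi-ordinary
    intro J'' hJ''s
    rcases mem_blowupH_elim D.F.mem_sub hinf hJ''s.1 with ⟨hi, hH, hns⟩ |
      ⟨hi, K, A, hKH, hJK, hA, hrep⟩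
    · have he : charΔ D J inf J'' = D.Δ J'' := by rw [charΔ, if_neg hi]
      have hDs : J'' ∈ Sing D := ⟨hH, by
        have h2 := hJ''s.2
        simp only at h2
        rwa [he] at h2⟩
      obtain ⟨σ, hσ⟩ := hQO J'' hDs
      refine ⟨σ, ?_⟩
      show charΔ D J inf J'' = _
      rw [he]
      exact hσ
    · refine ⟨lamMap J J'' inf (sysVtx D K) - eVec inf, ?_⟩
      show charΔ D J inf J'' = _
      rw [hnewV K A J'' hKH hJK hA hrep, posHull_singleton]
  · -- singular locus description
    intro J'' hJ''s
    rcases mem_blowupH_elim D.F.mem_sub hinf hJ''s.1 with ⟨hi, hH, hns⟩ |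
      ⟨hi, K, A, hKH, hJK, hA, hrep⟩
    · have he : charΔ D J inf J'' = D.Δ J'' := by rw [charΔ, if_neg hi]
      refine Or.inl ⟨hns, ⟨hH, ?_⟩, ?_⟩
      · have h2 := hJ''s.2
        simp only at h2
        rwa [he] at h2
      · show contactExp J'' (charΔ D J inf J'') = _
        rw [he]
    · refine Or.inr ⟨K, hup K hKH hJK, ?_⟩
      have hKs := hup K hKH hJK
      have hrw := hnewV K A J'' hKH hJK hA hrep
      have hne : J'' ≠ ∅ := Finset.ne_empty_of_mem hi
      have hδ' : contactExp J'' (charΔ D J inf J'')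
          = ∑ j ∈ J'', (lamMap J J'' inf (sysVtx D K) - eVec inf) j := by
        rw [hrw, contactExp_vertSet hne]
      have hinfK : inf ∉ K := fun hc => hinf (D.F.mem_sub K hKH hc)
      have hinfA : inf ∉ A := fun hc => hinfJ (hA.subset hc)
      have hdisj1 : Disjoint ((K \ J) ∪ A) ({inf} : Finset ℕ) := by
        rw [Finset.disjoint_singleton_right, Finset.mem_union, Finset.mem_sdiff]
        push_neg
        exact ⟨fun hc => absurd hc hinfK, hinfA⟩
      have hsum : ∑ j ∈ J'', (lamMap J J'' inf (sysVtx D K) - eVec inf) j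
          = (∑ j ∈ K, sysVtx D K j) + (∑ j ∈ A, sysVtx D K j) - 1 := by
        rw [hrep, Finset.sum_union hdisj1]
        have h1 : ∀ j ∈ (K \ J) ∪ A,
            (lamMap J ((K \ J) ∪ A ∪ {inf}) inf (sysVtx D K) - eVec inf) j
              = sysVtx D K j := by
          intro j hj
          have hjne : j ≠ inf := by
            rintro rfl
            rcases Finset.mem_union.mp hj with h | h
            · exact hinfK (Finset.mem_sdiff.mp h).1
            · exact hinfA h
          have hjJ'' : j ∈ (K \ J) ∪ A ∪ {inf} := Finset.mem_union_left _ hj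
          rw [wcoord, if_neg hjne, if_pos hjJ'']
        rw [Finset.sum_congr rfl h1]
        have hdisj2 : Disjoint (K \ J) A :=
          Finset.disjoint_of_subset_right hA.subset Finset.sdiff_disjoint
        rw [Finset.sum_union hdisj2, Finset.sum_singleton, wcoord, if_pos rfl]
        have h3 : ∑ j ∈ K \ J, sysVtx D K j
            = ∑ j ∈ K, sysVtx D K j - ∑ j ∈ J, sysVtx D K j := by
          rw [eq_sub_iff_add_eq, Finset.sum_sdiff hJK]
        rw [h3]
        ring
      have hA1 : (∑ j ∈ A, sysVtx D K j) < 1 := by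
        have hAH : A ∈ D.F.H := D.F.downward J hJs.1 A hA.subset
        have hAns : A ∉ Sing D := hmin A hA
        by_cases hAe : A = ∅
        · subst hAe; simp
        · have hAK : A ⊆ K := hA.subset.trans hJK
          have hΔA : D.Δ A = vertSet A (restrictV A (sysVtx D K)) := by
            have h := D.compat A hAH K hKH hAK
            rw [(hvspec K hKs).2] at h
            rw [h]
            exact restrictV_image_vertSet hAK _
          have hδA : contactExp A (D.Δ A) = ∑ j ∈ A, sysVtx D K j := by
            rw [hΔA, contactExp_vertSet hAe]
            exact Finset.sum_congr rfl fun j hj => by simp [restrictV, hj]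
          by_contra hc
          push_neg at hc
          exact hAns ⟨hAH, by rw [hδA]; exact hc⟩
      have hδK : contactExp K (D.Δ K) = ∑ j ∈ K, sysVtx D K j := sysVtx_delta hQO hKs
      show contactExp J'' (charΔ D J inf J'') < _
      rw [hδ', hsum, hδK]
      linarith

end Aux4

section Aux5

lemma step_lemma (D : PolySys) (hQO : IsQuasiOrdinary D) (hne : (Sing D).Nonempty) :
    ∃ (D' : PolySys) (J : Finset ℕ), IsCharTransform D D' J ∧ IsQuasiOrdinary D' ∧
      (Sing D' = ∅ ∨ (mu1 D' < mu1 D ∨ (mu1 D' = mu1 D ∧ mu2 D' < mu2 D))) := by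
  classical
  obtain ⟨⟨K₀, hK₀, hK₀eq⟩, hmax⟩ := maxδ_spec hne
  obtain ⟨J, hJmem, hJmin⟩ := Set.Finite.exists_minimalFor Finset.card
    {J | J ∈ Sing D ∧ J ⊆ K₀} ((sing_finite D).subset (fun x hx => hx.1))
    ⟨K₀, hK₀, Finset.Subset.refl K₀⟩
  have hmin : ∀ A, A ⊂ J → A ∉ Sing D := by
    intro A hA hAs
    have hAK₀ : A ⊆ K₀ := hA.subset.trans hJmem.2
    have hcard := hJmin (j := A) ⟨hAs, hAK₀⟩ (Finset.card_le_card hA.subset)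
    have := Finset.card_lt_card hA
    omega
  obtain ⟨D', hCT, hQO', hdeq, hdesc⟩ := exists_transform D hQO J hJmem.1 hmin
  refine ⟨D', J, hCT, hQO', ?_⟩
  by_cases hne' : Sing D' = ∅
  · exact Or.inl hne'
  right
  have hne'' : (Sing D').Nonempty := Set.nonempty_iff_ne_empty.mpr hne'
  have hle : ∀ J'' ∈ Sing D', contactExp J'' (D'.Δ J'') ≤ maxδ D := by
    intro J'' hJ''
    rcases hdesc J'' hJ'' with ⟨-, hSD, heq⟩ | ⟨K, hKS, hlt⟩
    · rw [heq]; exact hmax J'' hSD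
    · exact le_of_lt (lt_of_lt_of_le hlt (hmax K hKS))
  have hM'le : maxδ D' ≤ maxδ D := by
    apply csSup_le
    · obtain ⟨x, hx⟩ := hne''; exact ⟨_, x, hx, rfl⟩
    · rintro x ⟨J'', hJ'', rfl⟩; exact hle J'' hJ''
  have h1 : ((mu1 D' : ℝ)) = (D.d : ℝ) * maxδ D' := by
    rw [mu1_eq hQO' hne'', hdeq]
  have h2 : ((mu1 D : ℝ)) = (D.d : ℝ) * maxδ D := mu1_eq hQO hne
  have hd : (0:ℝ) < (D.d:ℝ) := by exact_mod_cast D.d_pos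
  have hle1 : mu1 D' ≤ mu1 D := by
    have hc : (mu1 D' : ℝ) ≤ (mu1 D : ℝ) := by
      rw [h1, h2]
      exact mul_le_mul_of_nonneg_left hM'le hd.le
    exact_mod_cast hc
  rcases lt_or_eq_of_le hle1 with hlt | heq1
  · exact Or.inl hlt
  · right
    have hMeq : maxδ D' = maxδ D := by
      have h3 : (D.d:ℝ) * maxδ D' = (D.d:ℝ) * maxδ D := by rw [← h1, ← h2, heq1]
      exact mul_left_cancel₀ hd.ne' h3
    refine ⟨heq1, ?_⟩
    have hSfin : {Jx | Jx ∈ Sing D ∧ contactExp Jx (D.Δ Jx) = maxδ D}.Finite :=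
      (sing_finite D).subset fun x hx => hx.1
    show Set.ncard _ < Set.ncard _
    apply Set.ncard_lt_ncard _ hSfin
    constructor
    · intro J'' hJ''
      rcases hdesc J'' hJ''.1 with ⟨hns, hSD, heqc⟩ | ⟨K, hKS, hlt⟩
      · exact ⟨hSD, by rw [← heqc, hJ''.2, hMeq]⟩
      · exfalso
        have h4 := hJ''.2
        rw [hMeq] at h4
        have hKle := hmax K hKS
        linarith
    · intro hsub
      have hK₀mem : K₀ ∈ {Jx | Jx ∈ Sing D ∧ contactExp Jx (D.Δ Jx) = maxδ D} :=
        ⟨hK₀, hK₀eq⟩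
      have hK₀' := hsub hK₀mem
      rcases hdesc K₀ hK₀'.1 with ⟨hns, -, -⟩ | ⟨K, hKS, hlt⟩
      · exact hns hJmem.2
      · have h5 := hK₀'.2
        rw [hMeq] at h5
        have := hmax K hKS
        linarith

end Aux5

/-- Every Hironaka quasi-ordinary polyhedra system admits a reduction of
singularities. -/
theorem quasi_ordinary_reduction (D : PolySys) (h : IsQuasiOrdinary D) :
    HasReduction D := by
  classical
  suffices H : ∀ a b : ℕ, ∀ D : PolySys, IsQuasiOrdinary D → mu1 D ≤ a → mu2 D ≤ b →
      HasReduction D from H (mu1 D) (mu2 D) D h le_rfl le_rfl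
  intro a
  induction a using Nat.strong_induction_on with
  | _ a iha =>
    intro b
    induction b using Nat.strong_induction_on with
    | _ b ihb =>
      intro D hQO h1 h2
      by_cases hS : Sing D = ∅
      · exact hasReduction_of_sing_empty hS
      · obtain ⟨D', J, hCT, hQO', hdec⟩ :=
          step_lemma D hQO (Set.nonempty_iff_ne_empty.mpr hS)
        rcases hdec with hS' | hlt | ⟨heq, hlt⟩
        · exact hasReduction_step hCT (hasReduction_of_sing_empty hS')
        · exact hasReduction_step hCT
            (iha (mu1 D') (lt_of_lt_of_le hlt h1) (mu2 D') D' hQO' le_rfl le_rfl)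
        · exact hasReduction_step hCT
            (ihb (mu2 D') (lt_of_lt_of_le hlt h2) D' hQO' ((le_of_eq heq).trans h1) le_rfl)

end RedSing
end

section
/- Stability of special systems: let D be a special polyhedra system and J ∈ Sing(D). Then δ(Λ_J(D)) ≤ 1; that is, δ(Δ'_{J'}) ≤ 1 for every stratum J' of the characteristic transform Λ_J(D), so Λ_J(D) is either non-singular or special. -/
open scoped Pointwise

namespace RedSing

/-- Auxiliary: the positive hull of a set of nonnegative vectors is nonnegative. -/
lemma posHull_nonneg {J : Finset ℕ} {A : Set Vec} (hA : ∀ σ ∈ A, ∀ j, 0 ≤ σ j) :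
    ∀ σ ∈ posHull J A, ∀ j, 0 ≤ σ j := by
  have hconv : Convex ℝ {σ : Vec | ∀ j, 0 ≤ σ j} := by
    intro x hx y hy a b ha hb _ j
    have := hx j; have := hy j
    simp only [Pi.add_apply, Pi.smul_apply, smul_eq_mul]
    positivity
  intro σ hσ
  have : σ ∈ {σ : Vec | ∀ j, 0 ≤ σ j} := by
    refine convexHull_min ?_ hconv hσ
    rintro τ ⟨a, ha, c, hc, rfl⟩ j
    exact add_nonneg (hA a ha j) (hc.1 j)
  exact this

/-- Auxiliary: polyhedra of a system are nonnegative. -/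
lemma Δ_nonneg (D : PolySys) {K : Finset ℕ} (hK : K ∈ D.F.H) :
    ∀ σ ∈ D.Δ K, ∀ j, 0 ≤ σ j := by
  obtain ⟨A, hA, hEq⟩ := D.char K hK
  rw [hEq]
  exact posHull_nonneg (fun σ hσ j => (hA hσ).1.1 j)

/-- Stability of special systems: if `D` is special and `J ∈ Sing(D)`, then
`δ(Λ_J(D)) ≤ 1`, i.e. every stratum of the characteristic transform has contact
exponent at most 1. -/
theorem special_stability (D D' : PolySys) (hsp : IsSpecial D) (J : Finset ℕ)
    (h : IsCharTransform D D' J) :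
    ∀ J' ∈ D'.F.H, contactExp J' (D'.Δ J') ≤ 1 := by
  obtain ⟨inf, hJSing, hd, hinfI, hI, hH, hΔ⟩ := h
  -- J is nonempty
  have hJne : J ≠ ∅ := by
    intro hJe
    have h1 := hJSing.2
    rw [contactExp, if_pos hJe] at h1
    linarith
  intro J' hJ'
  rw [hΔ J' hJ']
  rw [hH] at hJ'
  rcases hJ' with ⟨hJ'H, _⟩ | ⟨K₀, ⟨hK₀H, hJK₀⟩, A, hAJ, rfl⟩
  · -- old stratum: polyhedron unchanged, use specialness
    have hinf : inf ∉ J' := fun hmem => hinfI (D.F.mem_sub J' hJ'H hmem)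
    rw [charΔ, if_neg hinf]
    exact hsp.1 J' hJ'H
  · -- new stratum `J' = (K₀ \ J) ∪ A ∪ {inf}`
    set J' : Finset ℕ := (K₀ \ J) ∪ A ∪ {inf} with hJ'def
    have hinfK₀ : inf ∉ K₀ := fun hmem => hinfI (D.F.mem_sub K₀ hK₀H hmem)
    have hinfJ' : inf ∈ J' := by simp [hJ'def]
    have hAsub : A ⊆ J := hAJ.subset
    -- the blowdown of J' is K₀
    have hbd : blowdown J inf J' = K₀ := by
      rw [blowdown, if_pos hinfJ']
      ext j
      simp only [hJ'def, Finset.mem_union, Finset.mem_erase, Finset.mem_sdiff,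
        Finset.mem_singleton]
      constructor
      · rintro (⟨hne, (⟨hj, _⟩ | hj) | hj⟩ | hj)
        · exact hj
        · exact hJK₀ (hAsub hj)
        · exact absurd hj hne
        · exact hJK₀ hj
      · intro hj
        by_cases hjJ : j ∈ J
        · exact Or.inr hjJ
        · exact Or.inl ⟨fun he => hinfK₀ (he ▸ hj), Or.inl (Or.inl ⟨hj, hjJ⟩)⟩
    rw [charΔ, if_pos hinfJ', hbd]
    -- K₀ is a nonempty stratum
    have hK₀ne : K₀ ≠ ∅ := by
      intro he
      obtain ⟨j, hj⟩ := Finset.nonempty_iff_ne_empty.mpr hJne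
      exact absurd (hJK₀ hj) (by simp [he])
    have hJ'ne : J' ≠ ∅ := Finset.nonempty_iff_ne_empty.mp ⟨inf, hinfJ'⟩
    have hτnn := Δ_nonneg D hK₀H
    -- all elements of the polyhedron of J' have sum ≥ -1 (bounded below)
    set S' : Set ℝ := (fun σ => ∑ j ∈ J', σ j) ''
      ((fun σ => σ - eVec inf) '' posHull J' (lamMap J J' inf '' D.Δ K₀)) with hS'def
    have heVecSum : ∑ j ∈ J', eVec inf j = 1 := by
      simp [eVec, Finset.sum_ite_eq' J' inf (fun _ => (1 : ℝ)), hinfJ']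
    have hlamnn : ∀ σ ∈ lamMap J J' inf '' D.Δ K₀, ∀ j, 0 ≤ σ j := by
      rintro _ ⟨τ, hτ, rfl⟩ j
      rw [lamMap]
      split
      · exact Finset.sum_nonneg fun i _ => hτnn τ hτ i
      · split
        · exact hτnn τ hτ j
        · exact le_rfl
    have hbdd : BddBelow S' := by
      refine ⟨-1, ?_⟩
      rintro x ⟨σ, ⟨ρ, hρ, rfl⟩, rfl⟩
      have hρnn := posHull_nonneg hlamnn ρ hρ
      have heq : ∑ j ∈ J', (ρ - eVec inf) j = (∑ j ∈ J', ρ j) - 1 := by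
        rw [← heVecSum, ← Finset.sum_sub_distrib]; rfl
      show -1 ≤ ∑ j ∈ J', (ρ - eVec inf) j
      rw [heq]
      have : 0 ≤ ∑ j ∈ J', ρ j := Finset.sum_nonneg fun j _ => hρnn j
      linarith
    rw [contactExp, if_neg hJ'ne, ← hS'def]
    -- suppose for contradiction that sInf S' > 1
    by_contra hcon
    push_neg at hcon
    set ε : ℝ := (sInf S' - 1) / 2 with hεdef
    have hε : 0 < ε := by simp only [hεdef]; linarith
    -- find τ ∈ Δ_{K₀} with small sum
    have hK₀special : contactExp K₀ (D.Δ K₀) ≤ 1 := hsp.1 K₀ hK₀H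
    rw [contactExp, if_neg hK₀ne] at hK₀special
    have hSne : ((fun σ => ∑ j ∈ K₀, σ j) '' D.Δ K₀).Nonempty :=
      (D.nonempty K₀ hK₀H).image _
    obtain ⟨x, ⟨τ, hτ, rfl⟩, hx⟩ := Real.lt_sInf_add_pos hSne hε
    have hτsum : ∑ j ∈ K₀, τ j < 1 + ε := lt_of_lt_of_le hx (by linarith)
    -- the element λ(τ) - e of the transform
    have hmem : (fun σ => ∑ j ∈ J', σ j) (lamMap J J' inf τ - eVec inf) ∈ S' :=
      ⟨_, ⟨_, subset_posHull _ _ ⟨τ, hτ, rfl⟩, rfl⟩, rfl⟩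
    have hle : sInf S' ≤ ∑ j ∈ J', (lamMap J J' inf τ - eVec inf) j := csInf_le hbdd hmem
    -- bound the sum
    have hsum1 : ∑ j ∈ J', (lamMap J J' inf τ - eVec inf) j =
        (∑ j ∈ J', lamMap J J' inf τ j) - 1 := by
      rw [← heVecSum, ← Finset.sum_sub_distrib]; rfl
    have hsplit : lamMap J J' inf τ inf + ∑ j ∈ J'.erase inf, lamMap J J' inf τ j =
        ∑ j ∈ J', lamMap J J' inf τ j := Finset.add_sum_erase J' _ hinfJ'
    have hval_inf : lamMap J J' inf τ inf = ∑ i ∈ J, τ i := by rw [lamMap]; simp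
    have hval : ∀ j ∈ J'.erase inf, lamMap J J' inf τ j = τ j := by
      intro j hj
      rw [lamMap, if_neg (Finset.ne_of_mem_erase hj), if_pos (Finset.mem_of_mem_erase hj)]
    have hb1 : ∑ i ∈ J, τ i ≤ ∑ j ∈ K₀, τ j :=
      Finset.sum_le_sum_of_subset_of_nonneg hJK₀ fun j hj _ => hτnn τ hτ j
    have herasesub : J'.erase inf ⊆ K₀ := by
      intro j hj
      have hjJ' := Finset.mem_of_mem_erase hj
      have hjne := Finset.ne_of_mem_erase hj
      simp only [hJ'def, Finset.mem_union, Finset.mem_sdiff, Finset.mem_singleton] at hjJ'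
      rcases hjJ' with (⟨hj1, _⟩ | hj1) | hj1
      · exact hj1
      · exact hJK₀ (hAsub hj1)
      · exact absurd hj1 hjne
    have hb2 : ∑ j ∈ J'.erase inf, lamMap J J' inf τ j ≤ ∑ j ∈ K₀, τ j := by
      rw [Finset.sum_congr rfl hval]
      exact Finset.sum_le_sum_of_subset_of_nonneg herasesub fun j hj _ => hτnn τ hτ j
    have : ∑ j ∈ J', (lamMap J J' inf τ - eVec inf) j ≤ 2 * (∑ j ∈ K₀, τ j) - 1 := by
      rw [hsum1, ← hsplit, hval_inf]; linarith
    have : sInf S' ≤ 2 * (1 + ε) - 1 := by linarith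
    simp only [hεdef] at this
    linarith

end RedSing
end
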